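/- arXiv:2402.08628 — 6 statements merged into one kernel-verified Lean document; each statement's English description precedes it below -/
import Mathlib

section
/- Let X_1, …, X_N be independent ℝ^d-valued random variables with laws μ_1, …, μ_N, let ξ_1, …, ξ_N ∈ [0,1] with N_w := Σ_{j=1}^N ξ_j > 0, and set ν := N_w^{-1} Σ_j ξ_j δ_{X_j} and μ̄ := N_w^{-1} Σ_j ξ_j μ_j. Then for every Borel set A ⊆ ℝ^d one has E[ |ν(A) − μ̄(A)| ] ≤ min{ 2 μ̄(A) , ( μ̄(A) / N_w )^{1/2} }. -/
open MeasureTheory ENNReal Set Filter ProbabilityTheory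

noncomputable section

/-- The state space `ℝ^d`. -/
abbrev Ed (d : ℕ) : Type := EuclideanSpace ℝ (Fin d)

/-- The weighted empirical measure `N_w⁻¹ ∑_j ξ_j δ_{x_j}` with `N_w = ∑_j ξ_j`. -/
def wEmp {d N : ℕ} (ξ : Fin N → ℝ) (x : Fin N → Ed d) : Measure (Ed d) :=
  (ENNReal.ofReal (∑ j, ξ j))⁻¹ • ∑ j, ENNReal.ofReal (ξ j) • Measure.dirac (x j)

/-- The weighted mixture `N_w⁻¹ ∑_j ξ_j μ_j` of the laws, with `N_w = ∑_j ξ_j`. -/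
def wMix {d N : ℕ} (ξ : Fin N → ℝ) (μ : Fin N → Measure (Ed d)) : Measure (Ed d) :=
  (ENNReal.ofReal (∑ j, ξ j))⁻¹ • ∑ j, ENNReal.ofReal (ξ j) • μ j

lemma cs_helper {Ω : Type} [MeasurableSpace Ω] {P : Measure Ω}
    [IsProbabilityMeasure P] {f : Ω → ℝ} (hf : MemLp f 2 P) :
    ∫ ω, |f ω| ∂P ≤ Real.sqrt (∫ ω, f ω ^ 2 ∂P) := by
  have h2 : (2:ℝ).HolderConjugate 2 := Real.HolderConjugate.two_two
  have hone : MemLp (fun _ : Ω => (1:ℝ)) (ENNReal.ofReal 2) P := memLp_const 1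
  have hf2 : MemLp (fun ω => |f ω|) (ENNReal.ofReal 2) P := by
    have : ENNReal.ofReal (2:ℝ) = 2 := by norm_num
    rw [this]; exact hf.abs
  have H := integral_mul_le_Lp_mul_Lq_of_nonneg h2
    (Eventually.of_forall fun ω => abs_nonneg (f ω))
    (Eventually.of_forall fun _ => zero_le_one) hf2 hone
  simp only [mul_one] at H
  calc ∫ ω, |f ω| ∂P ≤ (∫ ω, |f ω| ^ (2:ℝ) ∂P) ^ (1/(2:ℝ)) * (∫ _ω, (1:ℝ) ^ (2:ℝ) ∂P) ^ (1/(2:ℝ)) := H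
    _ = Real.sqrt (∫ ω, f ω ^ 2 ∂P) := by
        have h1 : (∫ _ω, (1:ℝ) ^ (2:ℝ) ∂P) = 1 := by simp
        rw [h1, Real.one_rpow, mul_one]
        rw [Real.sqrt_eq_rpow]
        congr 1
        refine integral_congr_ae (Eventually.of_forall fun ω => ?_)
        simp [Real.rpow_natCast, sq_abs]

/-- mean absolute deviation of the weighted empirical measure of independent
samples from the weighted mixture of their laws, on any Borel set `A`. -/
theorem stmt_4 {d N : ℕ} {Ω : Type} [MeasurableSpace Ω] (P : Measure Ω)
    [IsProbabilityMeasure P]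
    (X : Fin N → Ω → Ed d) (hXmeas : ∀ j, Measurable (X j))
    (hindep : iIndepFun X P)
    (μ : Fin N → Measure (Ed d)) (hlaw : ∀ j, P.map (X j) = μ j)
    (ξ : Fin N → ℝ) (hξ : ∀ j, ξ j ∈ Set.Icc (0:ℝ) 1) (hNw : 0 < ∑ j, ξ j)
    (A : Set (Ed d)) (hA : MeasurableSet A) :
    ∫ ω, |((wEmp ξ fun j => X j ω) A).toReal - ((wMix ξ μ) A).toReal| ∂P ≤
      min (2 * ((wMix ξ μ) A).toReal)
        (Real.sqrt (((wMix ξ μ) A).toReal / (∑ j, ξ j))) := by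
  classical
  have hprob : ∀ j, IsProbabilityMeasure (μ j) := fun j => by
    rw [← hlaw j]; exact Measure.isProbabilityMeasure_map (hXmeas j).aemeasurable
  set Nw : ℝ := ∑ j, ξ j with hNwdef
  set p : Fin N → ℝ := fun j => (μ j A).toReal with hpdef
  have hp0 : ∀ j, 0 ≤ p j := fun j => ENNReal.toReal_nonneg
  have hp1 : ∀ j, p j ≤ 1 := fun j => by
    have := hprob j
    have h := ENNReal.toReal_mono one_ne_top (prob_le_one (μ := μ j) (s := A))
    simpa using h
  set Yf : Ed d → ℝ := A.indicator (fun _ => 1) with hYfdef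
  have hYfmeas : Measurable Yf := measurable_const.indicator hA
  have hYf01 : ∀ x, Yf x = 0 ∨ Yf x = 1 := fun x => by
    by_cases hx : x ∈ A <;> simp [hYfdef, Set.indicator_apply, hx]
  -- expectation of the indicator
  have hEY : ∀ j, ∫ ω, Yf (X j ω) ∂P = p j := by
    intro j
    rw [← integral_map (hXmeas j).aemeasurable hYfmeas.aestronglyMeasurable, hlaw j]
    exact integral_indicator_one hA
  have hYmem : ∀ j, MemLp (fun ω => Yf (X j ω)) 2 P := fun j =>
    (memLp_top_of_bound (hYfmeas.comp (hXmeas j)).aestronglyMeasurable 1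
      (Eventually.of_forall (fun ω => by
        rcases hYf01 (X j ω) with h | h <;> simp [Function.comp, h]))).mono_exponent le_top
  have hYint : ∀ j, Integrable (fun ω => Yf (X j ω)) P :=
    fun j => (hYmem j).integrable one_le_two
  -- the centered summands
  set Z : Fin N → Ω → ℝ := fun j ω => ξ j * (Yf (X j ω) - p j) with hZdef
  have hZmeas : ∀ j, Measurable (Z j) :=
    fun j => (measurable_const.mul ((hYfmeas.comp (hXmeas j)).sub measurable_const))
  have hZbd : ∀ j ω, ‖Z j ω‖ ≤ 1 := by
    intro j ω
    rw [Real.norm_eq_abs, hZdef, abs_mul, abs_of_nonneg (hξ j).1]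
    have h1 : |Yf (X j ω) - p j| ≤ 1 := by
      rw [abs_le]
      rcases hYf01 (X j ω) with h | h <;> rw [h] <;>
        constructor <;> nlinarith [hp0 j, hp1 j]
    nlinarith [(hξ j).1, (hξ j).2, abs_nonneg (Yf (X j ω) - p j)]
  have hZmem : ∀ j, MemLp (Z j) 2 P := fun j =>
    (memLp_top_of_bound (hZmeas j).aestronglyMeasurable 1
      (Eventually.of_forall (hZbd j))).mono_exponent le_top
  have hZint : ∀ j, Integrable (Z j) P := fun j => (hZmem j).integrable one_le_two
  have hEZ : ∀ j, ∫ ω, Z j ω ∂P = 0 := by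
    intro j
    simp only [hZdef]
    rw [integral_const_mul, integral_sub (hYint j) (integrable_const _),
      integral_const, hEY j]
    simp
  -- the sum S
  set S : Ω → ℝ := ∑ j, Z j with hSdef
  have hSapp : ∀ ω, S ω = ∑ j, Z j ω := fun ω => by
    rw [hSdef]; simp [Finset.sum_apply]
  have hSmem : MemLp S 2 P := memLp_finsetSum' _ (fun j _ => hZmem j)
  have hSint : Integrable S P := hSmem.integrable one_le_two
  have hES : ∫ ω, S ω ∂P = 0 := by
    rw [integral_congr_ae (Eventually.of_forall hSapp),
      integral_finset_sum _ (fun j _ => hZint j)]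
    simp [hEZ]
  -- pointwise identification of the integrand
  have hMix : ((wMix ξ μ) A).toReal = Nw⁻¹ * ∑ j, ξ j * p j := by
    rw [wMix, Measure.smul_apply, Measure.finset_sum_apply, smul_eq_mul,
      ENNReal.toReal_mul, ENNReal.toReal_inv, ENNReal.toReal_ofReal hNw.le]
    congr 1
    rw [ENNReal.toReal_sum (fun j _ => by
      have := hprob j
      exact ENNReal.mul_ne_top ENNReal.ofReal_ne_top (measure_ne_top _ _))]
    refine Finset.sum_congr rfl fun j _ => ?_
    rw [Measure.smul_apply, smul_eq_mul, ENNReal.toReal_mul,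
      ENNReal.toReal_ofReal (hξ j).1]
  have hEmp : ∀ ω, ((wEmp ξ fun j => X j ω) A).toReal = Nw⁻¹ * ∑ j, ξ j * Yf (X j ω) := by
    intro ω
    rw [wEmp, Measure.smul_apply, Measure.finset_sum_apply, smul_eq_mul,
      ENNReal.toReal_mul, ENNReal.toReal_inv, ENNReal.toReal_ofReal hNw.le]
    congr 1
    rw [ENNReal.toReal_sum (fun j _ => by
      rw [Measure.smul_apply, smul_eq_mul]
      exact ENNReal.mul_ne_top ENNReal.ofReal_ne_top (measure_ne_top _ _))]
    refine Finset.sum_congr rfl fun j _ => ?_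
    rw [Measure.smul_apply, smul_eq_mul, ENNReal.toReal_mul,
      ENNReal.toReal_ofReal (hξ j).1, Measure.dirac_apply' _ hA]
    by_cases hx : X j ω ∈ A <;> simp [hYfdef, Set.indicator_apply, hx]
  have hpoint : ∀ ω, |((wEmp ξ fun j => X j ω) A).toReal - ((wMix ξ μ) A).toReal|
      = Nw⁻¹ * |S ω| := by
    intro ω
    rw [hEmp ω, hMix, hSapp]
    rw [← mul_sub, abs_mul, abs_of_nonneg (inv_nonneg.2 hNw.le)]
    congr 2
    rw [← Finset.sum_sub_distrib]
    exact Finset.sum_congr rfl fun j _ => by rw [hZdef]; ring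
  -- reduce the goal
  rw [integral_congr_ae (Eventually.of_forall hpoint), integral_const_mul]
  -- bound 1
  have hbound1 : ∫ ω, |S ω| ∂P ≤ 2 * ∑ j, ξ j * p j := by
    have habs : ∀ ω, |S ω| ≤ ∑ j, |Z j ω| := fun ω => by
      rw [hSapp]; exact Finset.abs_sum_le_sum_abs _ _
    calc ∫ ω, |S ω| ∂P ≤ ∫ ω, ∑ j, |Z j ω| ∂P := by
          refine integral_mono hSint.abs (integrable_finset_sum _ fun j _ => (hZint j).abs) habs
      _ = ∑ j, ∫ ω, |Z j ω| ∂P := integral_finset_sum _ fun j _ => (hZint j).abs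
      _ ≤ ∑ j, 2 * (ξ j * p j) := by
          refine Finset.sum_le_sum fun j _ => ?_
          have h1 : ∀ ω, |Z j ω| ≤ ξ j * (Yf (X j ω) + p j) := by
            intro ω
            rw [hZdef, abs_mul, abs_of_nonneg (hξ j).1]
            refine mul_le_mul_of_nonneg_left ?_ (hξ j).1
            calc |Yf (X j ω) - p j| ≤ |Yf (X j ω)| + |p j| := abs_sub _ _
              _ = Yf (X j ω) + p j := by
                  rw [abs_of_nonneg (by rcases hYf01 (X j ω) with h | h <;> rw [h] <;> norm_num),
                    abs_of_nonneg (hp0 j)]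
          calc ∫ ω, |Z j ω| ∂P ≤ ∫ ω, ξ j * (Yf (X j ω) + p j) ∂P := by
                refine integral_mono (hZint j).abs ?_ h1
                exact (((hYint j).add (integrable_const _)).const_mul _)
            _ = 2 * (ξ j * p j) := by
                rw [integral_const_mul, integral_add (hYint j) (integrable_const _),
                  integral_const, hEY j]
                simp; ring
      _ = 2 * ∑ j, ξ j * p j := by rw [Finset.mul_sum]
  -- bound 2 (via variance)
  have hvarZ : ∀ j, variance (Z j) P ≤ ξ j * p j := by
    intro j
    rw [variance_eq_sub (hZmem j), hEZ j]
    simp only [Pi.pow_apply]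
    have hZsq : ∀ ω, Z j ω ^ 2 = ξ j ^ 2 * ((1 - 2 * p j) * Yf (X j ω) + p j ^ 2) := by
      intro ω
      simp only [hZdef]
      rcases hYf01 (X j ω) with h | h <;> rw [h] <;> ring
    have hint : ∫ ω, Z j ω ^ 2 ∂P = ξ j ^ 2 * (p j - p j ^ 2) := by
      rw [integral_congr_ae (Eventually.of_forall hZsq), integral_const_mul,
        integral_add ((hYint j).const_mul _) (integrable_const _), integral_const_mul,
        hEY j, integral_const]
      simp only [measure_univ, ENNReal.toReal_one, smul_eq_mul, one_mul, probReal_univ, mul_one]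
      ring
    rw [hint]
    nlinarith [mul_nonneg (mul_nonneg (hξ j).1 (hp0 j)) (sub_nonneg.2 (hξ j).2),
      sq_nonneg (ξ j * p j)]
  have hvarS : variance S P ≤ ∑ j, ξ j * p j := by
    rw [hSdef, IndepFun.variance_sum (fun j _ => hZmem j) ?_]
    · exact Finset.sum_le_sum fun j _ => hvarZ j
    · intro i hi j hj hij
      have h := (hindep.indepFun hij).comp
        (φ := fun x => ξ i * (Yf x - p i)) (ψ := fun x => ξ j * (Yf x - p j))
        (measurable_const.mul (hYfmeas.sub measurable_const))
        (measurable_const.mul (hYfmeas.sub measurable_const))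
      exact h
  have hbound2 : ∫ ω, |S ω| ∂P ≤ Real.sqrt (∑ j, ξ j * p j) := by
    have h1 := cs_helper hSmem
    have h2 : ∫ ω, S ω ^ 2 ∂P = variance S P := by
      rw [variance_eq_sub hSmem, hES]
      simp [Pi.pow_apply]
    rw [h2] at h1
    exact h1.trans (Real.sqrt_le_sqrt hvarS)
  -- conclude
  have hsum_nonneg : 0 ≤ ∑ j, ξ j * p j :=
    Finset.sum_nonneg fun j _ => mul_nonneg (hξ j).1 (hp0 j)
  rw [le_min_iff]
  constructor
  · calc Nw⁻¹ * ∫ ω, |S ω| ∂P ≤ Nw⁻¹ * (2 * ∑ j, ξ j * p j) :=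
        mul_le_mul_of_nonneg_left hbound1 (inv_nonneg.2 hNw.le)
      _ = 2 * ((wMix ξ μ) A).toReal := by rw [hMix]; ring
  · calc Nw⁻¹ * ∫ ω, |S ω| ∂P ≤ Nw⁻¹ * Real.sqrt (∑ j, ξ j * p j) :=
        mul_le_mul_of_nonneg_left hbound2 (inv_nonneg.2 hNw.le)
      _ = Real.sqrt (((wMix ξ μ) A).toReal / Nw) := by
        have hNw0 : Nw ≠ 0 := ne_of_gt hNw
        have key : ((wMix ξ μ) A).toReal / Nw = (∑ j, ξ j * p j) / Nw ^ 2 := by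
          rw [hMix, inv_mul_eq_div, div_div, sq]
        rw [key, Real.sqrt_div hsum_nonneg, Real.sqrt_sq hNw.le, div_eq_inv_mul]

end
end

section
/- Let X_1, …, X_N be independent ℝ^d-valued random variables with laws μ_1, …, μ_N, let ξ_1, …, ξ_N ∈ [0,1] with N_w := Σ_{j=1}^N ξ_j > 0, and set ν := N_w^{-1} Σ_j ξ_j δ_{X_j} and μ̄ := N_w^{-1} Σ_j ξ_j μ_j. Then for all integers n ≥ 0 and l ≥ 0: Σ_{F ∈ P_l} E[ |ν(2ⁿF ∩ B_n) − μ̄(2ⁿF ∩ B_n)| ] ≤ min{ 2 μ̄(B_n) , 2^{dl/2} ( μ̄(B_n)/N_w )^{1/2} }. -/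
open MeasureTheory ENNReal Set Filter ProbabilityTheory

noncomputable section

/-- The box `(-a, a]^d ⊆ ℝ^d`. -/
def box (d : ℕ) (a : ℝ) : Set (Ed d) := {x | ∀ i, x i ∈ Set.Ioc (-a) a}

/-- The dyadic annuli: `B_0 = (-1,1]^d` and `B_n = (-2ⁿ,2ⁿ]^d \ (-2^{n-1},2^{n-1}]^d`. -/
def Bset (d : ℕ) (n : ℕ) : Set (Ed d) :=
  if n = 0 then box d 1 else box d (2 ^ n) \ box d (2 ^ (n - 1))

/-- The cell of index `k` in the natural partition `P_l` of `(-1,1]^d` into `2^{dl}`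
translates of `(-2^{-l},2^{-l}]^d` (cubes of side `2^{1-l}`). -/
def cell (d l : ℕ) (k : Fin d → Fin (2 ^ l)) : Set (Ed d) :=
  {x | ∀ i, x i ∈
    Set.Ioc (-1 + (k i : ℝ) * 2 ^ (1 - (l : ℤ))) (-1 + ((k i : ℝ) + 1) * 2 ^ (1 - (l : ℤ)))}

lemma measurableSet_box (d : ℕ) (a : ℝ) : MeasurableSet (box d a) := by
  have : box d a = ⋂ i, (fun x : Ed d => x i) ⁻¹' Set.Ioc (-a) a := by
    ext x; simp [box]
  rw [this]
  exact MeasurableSet.iInter fun i => ((measurable_pi_apply i).comp (WithLp.measurable_ofLp 2 _)) measurableSet_Ioc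

lemma measurableSet_Bset (d n : ℕ) : MeasurableSet (Bset d n) := by
  unfold Bset
  split
  · exact measurableSet_box d 1
  · exact (measurableSet_box d _).diff (measurableSet_box d _)

lemma measurableSet_cell (d l : ℕ) (k : Fin d → Fin (2 ^ l)) : MeasurableSet (cell d l k) := by
  have : cell d l k = ⋂ i, (fun x : Ed d => x i) ⁻¹' Set.Ioc
      (-1 + (k i : ℝ) * 2 ^ (1 - (l : ℤ))) (-1 + ((k i : ℝ) + 1) * 2 ^ (1 - (l : ℤ))) := by
    ext x; simp [cell]
  rw [this]
  exact MeasurableSet.iInter fun i => ((measurable_pi_apply i).comp (WithLp.measurable_ofLp 2 _)) measurableSet_Ioc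

lemma cell_disjoint (d l : ℕ) {k k' : Fin d → Fin (2 ^ l)} (hkk : k ≠ k') :
    Disjoint (cell d l k) (cell d l k') := by
  rw [Set.disjoint_left]
  intro x hx hx'
  obtain ⟨i, hi⟩ := Function.ne_iff.mp hkk
  have hh : (0:ℝ) < 2 ^ (1 - (l : ℤ)) := by positivity
  have key : ∀ a b : ℕ, a < b →
      x i ∈ Set.Ioc (-1 + (a:ℝ) * 2 ^ (1 - (l : ℤ))) (-1 + ((a:ℝ) + 1) * 2 ^ (1 - (l : ℤ))) →
      x i ∈ Set.Ioc (-1 + (b:ℝ) * 2 ^ (1 - (l : ℤ))) (-1 + ((b:ℝ) + 1) * 2 ^ (1 - (l : ℤ))) →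
      False := by
    intro a b hab ⟨_, h2⟩ ⟨h3, _⟩
    have : (a:ℝ) + 1 ≤ b := by exact_mod_cast Nat.succ_le_of_lt hab
    nlinarith [h2, h3, mul_le_mul_of_nonneg_right this hh.le]
  rcases lt_or_gt_of_ne (fun h => hi (Fin.ext h) : (k i : ℕ) ≠ (k' i : ℕ)) with h | h
  · exact key _ _ h (hx i) (hx' i)
  · exact key _ _ h (hx' i) (hx i)

lemma image_smul_measurable {d : ℕ} {c : ℝ} (hc : c ≠ 0) {s : Set (Ed d)}
    (hs : MeasurableSet s) : MeasurableSet ((fun x => c • x) '' s) := by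
  have : (fun x : Ed d => c • x) '' s = (fun x : Ed d => c⁻¹ • x) ⁻¹' s := by
    ext y
    constructor
    · rintro ⟨x, hx, rfl⟩; simpa [inv_smul_smul₀ hc] using hx
    · intro hy; exact ⟨c⁻¹ • y, hy, by simp [smul_smul, mul_inv_cancel₀ hc]⟩
  rw [this]
  exact (measurable_const_smul _) hs

lemma image_smul_disjoint {d : ℕ} {c : ℝ} (hc : c ≠ 0) {s t : Set (Ed d)}
    (h : Disjoint s t) : Disjoint ((fun x => c • x) '' s) ((fun x => c • x) '' t) :=
  Set.disjoint_image_of_injective (smul_right_injective (Ed d) hc) h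

lemma toReal_key {N : ℕ} {c : ℝ} (hc : 0 < c) {w : Fin N → ℝ} (hw : ∀ j, 0 ≤ w j)
    {m : Fin N → ℝ≥0∞} (hm : ∀ j, m j ≠ ∞) :
    ((ENNReal.ofReal c)⁻¹ * ∑ j, ENNReal.ofReal (w j) * m j).toReal
      = c⁻¹ * ∑ j, w j * (m j).toReal := by
  rw [ENNReal.toReal_mul, ENNReal.toReal_inv, ENNReal.toReal_ofReal hc.le,
    ENNReal.toReal_sum (fun j _ => ENNReal.mul_ne_top ENNReal.ofReal_ne_top (hm j))]
  congr 1
  exact Finset.sum_congr rfl fun j _ => by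
    rw [ENNReal.toReal_mul, ENNReal.toReal_ofReal (hw j)]

lemma wMix_apply {d N : ℕ} (ξ : Fin N → ℝ) (μ : Fin N → Measure (Ed d)) (A : Set (Ed d)) :
    wMix ξ μ A = (ENNReal.ofReal (∑ j, ξ j))⁻¹ * ∑ j, ENNReal.ofReal (ξ j) * μ j A := by
  simp [wMix, Measure.finset_sum_apply]

lemma wEmp_apply {d N : ℕ} (ξ : Fin N → ℝ) (x : Fin N → Ed d) {A : Set (Ed d)}
    (hA : MeasurableSet A) :
    wEmp ξ x A = (ENNReal.ofReal (∑ j, ξ j))⁻¹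
      * ∑ j, ENNReal.ofReal (ξ j) * A.indicator (1 : Ed d → ℝ≥0∞) (x j) := by
  simp [wEmp, Measure.finset_sum_apply, Measure.dirac_apply' _ hA]

lemma wMix_toReal {d N : ℕ} {ξ : Fin N → ℝ} (hw : ∀ j, 0 ≤ ξ j) (hNw : 0 < ∑ j, ξ j)
    {μ : Fin N → Measure (Ed d)} [∀ j, IsProbabilityMeasure (μ j)] (A : Set (Ed d)) :
    (wMix ξ μ A).toReal = (∑ j, ξ j)⁻¹ * ∑ j, ξ j * (μ j A).toReal := by
  rw [wMix_apply, toReal_key hNw hw (fun j => measure_ne_top _ _)]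

lemma wEmp_toReal {d N : ℕ} {ξ : Fin N → ℝ} (hw : ∀ j, 0 ≤ ξ j) (hNw : 0 < ∑ j, ξ j)
    (x : Fin N → Ed d) {A : Set (Ed d)} (hA : MeasurableSet A) :
    (wEmp ξ x A).toReal = (∑ j, ξ j)⁻¹ * ∑ j, ξ j * A.indicator (1 : Ed d → ℝ) (x j) := by
  rw [wEmp_apply _ _ hA, toReal_key hNw hw]
  · congr 1
    refine Finset.sum_congr rfl fun j _ => ?_
    by_cases h : x j ∈ A <;> simp [h]
  · intro j
    by_cases h : x j ∈ A <;> simp [h]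

lemma wMix_ne_top {d N : ℕ} {ξ : Fin N → ℝ} (hNw : 0 < ∑ j, ξ j) {μ : Fin N → Measure (Ed d)}
    [∀ j, IsProbabilityMeasure (μ j)] (A : Set (Ed d)) : wMix ξ μ A ≠ ∞ := by
  rw [wMix_apply]
  exact ENNReal.mul_ne_top (ENNReal.inv_ne_top.mpr (by
      simp only [ne_eq, ENNReal.ofReal_eq_zero, not_le]
      exact hNw))
    (by
      refine (ENNReal.sum_lt_top.mpr fun j _ => ?_).ne
      exact ENNReal.mul_lt_top ENNReal.ofReal_lt_top (measure_lt_top _ _))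

lemma abs_integral_le_sqrt_sq {Ω : Type} [MeasurableSpace Ω] {P : Measure Ω}
    [IsProbabilityMeasure P] {Z : Ω → ℝ} (hZ : MemLp Z 2 P) :
    ∫ ω, |Z ω| ∂P ≤ Real.sqrt (∫ ω, (Z ω) ^ 2 ∂P) := by
  have hpq : Real.HolderConjugate 2 2 := Real.HolderConjugate.two_two
  have habs : MemLp (fun ω => |Z ω|) (ENNReal.ofReal 2) P := by
    have : ENNReal.ofReal 2 = 2 := by norm_num
    rw [this]; exact hZ.abs
  have hone : MemLp (fun _ : Ω => (1:ℝ)) (ENNReal.ofReal 2) P := memLp_const 1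
  have key := integral_mul_le_Lp_mul_Lq_of_nonneg hpq
    (Filter.Eventually.of_forall fun ω => abs_nonneg (Z ω))
    (Filter.Eventually.of_forall fun _ => zero_le_one) habs hone
  have heq : (fun a => |Z a| ^ (2:ℝ)) = fun a => Z a ^ 2 := by
    funext a
    rw [show (2:ℝ) = ((2:ℕ):ℝ) by norm_num, Real.rpow_natCast, sq_abs]
  simp only [mul_one, heq, Real.one_rpow, integral_const, measure_univ,
    ENNReal.toReal_one, smul_eq_mul, one_mul, Real.one_rpow, probReal_univ] at key
  rw [Real.sqrt_eq_rpow]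
  exact key

lemma percell {d N : ℕ} {Ω : Type} [MeasurableSpace Ω] (P : Measure Ω)
    [IsProbabilityMeasure P]
    (X : Fin N → Ω → Ed d) (hXmeas : ∀ j, Measurable (X j))
    (hindep : iIndepFun X P)
    (μ : Fin N → Measure (Ed d)) (hlaw : ∀ j, P.map (X j) = μ j)
    (ξ : Fin N → ℝ) (hξ : ∀ j, ξ j ∈ Set.Icc (0:ℝ) 1) (hNw : 0 < ∑ j, ξ j)
    {A : Set (Ed d)} (hA : MeasurableSet A) :
    (∫ ω, |((wEmp ξ fun j => X j ω) A).toReal - ((wMix ξ μ) A).toReal| ∂P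
        ≤ 2 * ((wMix ξ μ) A).toReal)
    ∧ (∫ ω, |((wEmp ξ fun j => X j ω) A).toReal - ((wMix ξ μ) A).toReal| ∂P
        ≤ Real.sqrt (((wMix ξ μ) A).toReal / (∑ j, ξ j))) := by
  classical
  haveI hprob : ∀ j, IsProbabilityMeasure (μ j) :=
    fun j => (hlaw j) ▸ Measure.isProbabilityMeasure_map (hXmeas j).aemeasurable
  set Nw := ∑ j, ξ j with hNwdef
  have hw : ∀ j, 0 ≤ ξ j := fun j => (hξ j).1
  set ind : Ed d → ℝ := A.indicator 1 with hinddef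
  have hind_meas : Measurable ind := measurable_one.indicator hA
  have hind_mem : ∀ v, ind v ∈ Set.Icc (0:ℝ) 1 := by
    intro v; by_cases h : v ∈ A <;> simp [hinddef, h]
  have hind_sq : ∀ v, ind v ^ 2 = ind v := by
    intro v; by_cases h : v ∈ A <;> simp [hinddef, h]
  set Y : Fin N → Ω → ℝ := fun j ω => ξ j * ind (X j ω) with hYdef
  set S : Ω → ℝ := fun ω => ∑ j, Y j ω with hSdef
  set M : ℝ := ∑ j, ξ j * (μ j A).toReal with hMdef
  have hYmeas : ∀ j, Measurable (Y j) := fun j => (hind_meas.comp (hXmeas j)).const_mul _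
  have hYmem : ∀ j, MemLp (Y j) 2 P := by
    intro j
    refine memLp_of_bounded (a := 0) (b := 1) (Filter.Eventually.of_forall fun ω => ?_)
      (hYmeas j).aestronglyMeasurable 2
    constructor
    · exact mul_nonneg (hw j) (hind_mem _).1
    · exact mul_le_one₀ (hξ j).2 (hind_mem _).1 (hind_mem _).2
  have hYint : ∀ j, Integrable (Y j) P := fun j => (hYmem j).integrable one_le_two
  have hEind : ∀ j, ∫ ω, ind (X j ω) ∂P = (μ j A).toReal := by
    intro j
    rw [← integral_map (hXmeas j).aemeasurable hind_meas.aestronglyMeasurable, hlaw j,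
      hinddef]
    exact integral_indicator_one hA
  have hEY : ∀ j, ∫ ω, Y j ω ∂P = ξ j * (μ j A).toReal := by
    intro j
    rw [hYdef]
    simp only []
    rw [integral_const_mul, hEind j]
  have hES : ∫ ω, S ω ∂P = M := by
    rw [hSdef]
    simp only []
    rw [integral_finset_sum _ (fun j _ => hYint j)]
    exact Finset.sum_congr rfl fun j _ => hEY j
  have hSmem : MemLp S 2 P := by
    have hs : S = ∑ j ∈ Finset.univ, Y j := by funext ω; simp [hSdef]
    rw [hs]
    exact memLp_finset_sum' _ fun j _ => hYmem j
  have hSint : Integrable S P := hSmem.integrable one_le_two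
  have hS0 : ∀ ω, 0 ≤ S ω :=
    fun ω => Finset.sum_nonneg fun j _ => mul_nonneg (hw j) (hind_mem _).1
  have hM0 : 0 ≤ M :=
    Finset.sum_nonneg fun j _ => mul_nonneg (hw j) ENNReal.toReal_nonneg
  have hempω : ∀ ω, ((wEmp ξ fun j => X j ω) A).toReal = Nw⁻¹ * S ω :=
    fun ω => wEmp_toReal hw hNw _ hA
  have hmix : ((wMix ξ μ) A).toReal = Nw⁻¹ * M := by
    rw [wMix_toReal hw hNw A]
  have hNinv0 : (0:ℝ) ≤ Nw⁻¹ := inv_nonneg.2 hNw.le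
  have hint_eq : (fun ω => |((wEmp ξ fun j => X j ω) A).toReal - ((wMix ξ μ) A).toReal|)
      = fun ω => Nw⁻¹ * |S ω - M| := by
    funext ω
    rw [hempω, hmix, ← mul_sub, abs_mul, abs_of_nonneg hNinv0]
  rw [show (∫ ω, |((wEmp ξ fun j => X j ω) A).toReal - ((wMix ξ μ) A).toReal| ∂P)
      = Nw⁻¹ * ∫ ω, |S ω - M| ∂P by rw [← integral_const_mul]; exact congrArg _ hint_eq]
  have habs_int : Integrable (fun ω => |S ω - M|) P := (hSint.sub (integrable_const M)).abs
  constructor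
  · -- first bound
    have hptwise : ∀ ω, |S ω - M| ≤ S ω + M := fun ω =>
      (abs_sub (S ω) M).trans_eq (by rw [abs_of_nonneg (hS0 ω), abs_of_nonneg hM0])
    have h1 : ∫ ω, |S ω - M| ∂P ≤ ∫ ω, S ω + M ∂P :=
      integral_mono habs_int (hSint.add (integrable_const M)) hptwise
    have h2 : ∫ ω, S ω + M ∂P = 2 * M := by
      rw [integral_add hSint (integrable_const M), hES, integral_const]
      simp; ring
    calc Nw⁻¹ * ∫ ω, |S ω - M| ∂P ≤ Nw⁻¹ * (2 * M) := by
          apply mul_le_mul_of_nonneg_left _ hNinv0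
          rw [← h2]; exact h1
      _ = 2 * ((wMix ξ μ) A).toReal := by rw [hmix]; ring
  · -- second bound
    have hZmem : MemLp (fun ω => S ω - M) 2 P := hSmem.sub (memLp_const M)
    have hholder : ∫ ω, |S ω - M| ∂P ≤ Real.sqrt (∫ ω, (S ω - M)^2 ∂P) :=
      abs_integral_le_sqrt_sq hZmem
    have hvar_eq : ∫ ω, (S ω - M)^2 ∂P = variance S P := by
      rw [variance_eq_integral hSmem.1.aemeasurable, hES]
    -- variance sum
    have hpair : Set.Pairwise ↑(Finset.univ : Finset (Fin N))
        (fun i j => IndepFun (Y i) (Y j) P) := by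
      intro i _ j _ hij
      have := (hindep.indepFun hij).comp
        (show Measurable (fun v : Ed d => ξ i * ind v) from hind_meas.const_mul _)
        (show Measurable (fun v : Ed d => ξ j * ind v) from hind_meas.const_mul _)
      exact this
    have hvar_sum : variance S P = ∑ j, variance (Y j) P := by
      have hs : S = ∑ j ∈ Finset.univ, Y j := by funext ω; simp [hSdef]
      rw [hs]
      exact IndepFun.variance_sum (fun j _ => hYmem j) hpair
    have hvar_le : variance S P ≤ M := by
      rw [hvar_sum, hMdef]
      refine Finset.sum_le_sum fun j _ => ?_
      have h1 : variance (Y j) P ≤ ∫ ω, (Y j ω)^2 ∂P :=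
        variance_le_expectation_sq (hYmeas j).aestronglyMeasurable
      have h2 : ∫ ω, (Y j ω)^2 ∂P = ξ j ^ 2 * (μ j A).toReal := by
        have : ∀ ω, (Y j ω)^2 = ξ j ^ 2 * ind (X j ω) := by
          intro ω
          rw [hYdef]
          simp only [mul_pow]
          rw [hind_sq]
        simp only [this]
        rw [integral_const_mul, hEind j]
      have h3 : ξ j ^ 2 * (μ j A).toReal ≤ ξ j * (μ j A).toReal := by
        apply mul_le_mul_of_nonneg_right _ ENNReal.toReal_nonneg
        nlinarith [(hξ j).1, (hξ j).2]
      linarith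
    have hsqrt : Real.sqrt (∫ ω, (S ω - M)^2 ∂P) ≤ Real.sqrt M := by
      apply Real.sqrt_le_sqrt
      rw [hvar_eq] at *
      linarith [hvar_le]
    have hrhs : Real.sqrt (((wMix ξ μ) A).toReal / Nw) = Nw⁻¹ * Real.sqrt M := by
      rw [hmix]
      rw [show Nw⁻¹ * M / Nw = M / Nw ^ 2 by rw [sq, div_eq_mul_inv, div_eq_mul_inv, mul_inv]; ring]
      rw [Real.sqrt_div hM0, Real.sqrt_sq hNw.le]
      rw [div_eq_inv_mul]
    rw [hrhs]
    exact mul_le_mul_of_nonneg_left (hholder.trans hsqrt) hNinv0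


/-- the chaining estimate on dyadic cells: for all `n, l ≥ 0`,
`∑_{F ∈ P_l} E|ν(2ⁿF ∩ B_n) − μ̄(2ⁿF ∩ B_n)| ≤ min{2 μ̄(B_n), 2^{dl/2} √(μ̄(B_n)/N_w)}`. -/
theorem stmt_6 {d N : ℕ} {Ω : Type} [MeasurableSpace Ω] (P : Measure Ω)
    [IsProbabilityMeasure P]
    (X : Fin N → Ω → Ed d) (hXmeas : ∀ j, Measurable (X j))
    (hindep : iIndepFun X P)
    (μ : Fin N → Measure (Ed d)) (hlaw : ∀ j, P.map (X j) = μ j)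
    (ξ : Fin N → ℝ) (hξ : ∀ j, ξ j ∈ Set.Icc (0:ℝ) 1) (hNw : 0 < ∑ j, ξ j)
    (n l : ℕ) :
    ∑ k : Fin d → Fin (2 ^ l),
        ∫ ω, |((wEmp ξ fun j => X j ω) ((fun x => (2:ℝ) ^ n • x) '' cell d l k ∩ Bset d n)).toReal
            - ((wMix ξ μ) ((fun x => (2:ℝ) ^ n • x) '' cell d l k ∩ Bset d n)).toReal| ∂P ≤
      min (2 * ((wMix ξ μ) (Bset d n)).toReal)
        ((2:ℝ) ^ (((d * l : ℕ) : ℝ) / 2) *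
          Real.sqrt (((wMix ξ μ) (Bset d n)).toReal / (∑ j, ξ j))) := by
  classical
  haveI hprob : ∀ j, IsProbabilityMeasure (μ j) :=
    fun j => (hlaw j) ▸ Measure.isProbabilityMeasure_map (hXmeas j).aemeasurable
  set Nw := ∑ j, ξ j with hNwdef
  have hc : ((2:ℝ) ^ n) ≠ 0 := by positivity
  set A : (Fin d → Fin (2 ^ l)) → Set (Ed d) :=
    fun k => (fun x => (2:ℝ) ^ n • x) '' cell d l k ∩ Bset d n with hAdef
  have hAmeas : ∀ k, MeasurableSet (A k) := fun k =>
    (image_smul_measurable hc (measurableSet_cell d l k)).inter (measurableSet_Bset d n)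
  have hAdisj : ∀ k k', k ≠ k' → Disjoint (A k) (A k') := fun k k' h =>
    Disjoint.mono Set.inter_subset_left Set.inter_subset_left
      (image_smul_disjoint hc (cell_disjoint d l h))
  have hAsub : ∀ k, A k ⊆ Bset d n := fun k => Set.inter_subset_right
  -- sum of measures of cells is at most measure of Bset
  have hsum_le : ∑ k, (wMix ξ μ) (A k) ≤ (wMix ξ μ) (Bset d n) := by
    rw [← measure_biUnion_finset (fun k _ j _ h => hAdisj k j h) (fun k _ => hAmeas k)]
    exact measure_mono (Set.iUnion₂_subset fun k _ => hAsub k)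
  have hBne : (wMix ξ μ) (Bset d n) ≠ ∞ := wMix_ne_top hNw _
  have hsum_toReal : ∑ k, ((wMix ξ μ) (A k)).toReal ≤ ((wMix ξ μ) (Bset d n)).toReal := by
    rw [← ENNReal.toReal_sum (fun k _ => wMix_ne_top hNw _)]
    exact ENNReal.toReal_mono hBne hsum_le
  have hpc := fun k => percell P X hXmeas hindep μ hlaw ξ hξ hNw (hAmeas k)
  rw [le_min_iff]
  constructor
  · calc ∑ k, ∫ ω, |((wEmp ξ fun j => X j ω) (A k)).toReal - ((wMix ξ μ) (A k)).toReal| ∂P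
        ≤ ∑ k, 2 * ((wMix ξ μ) (A k)).toReal := Finset.sum_le_sum fun k _ => (hpc k).1
      _ = 2 * ∑ k, ((wMix ξ μ) (A k)).toReal := by rw [Finset.mul_sum]
      _ ≤ 2 * ((wMix ξ μ) (Bset d n)).toReal := by linarith
  · set a : (Fin d → Fin (2 ^ l)) → ℝ := fun k => ((wMix ξ μ) (A k)).toReal with hadef
    have ha0 : ∀ k, 0 ≤ a k := fun k => ENNReal.toReal_nonneg
    have card_eq : (Fintype.card (Fin d → Fin (2 ^ l)) : ℝ) = (2:ℝ) ^ (d * l) := by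
      rw [Fintype.card_fun]
      simp only [Fintype.card_fin]
      push_cast
      rw [← pow_mul, mul_comm l d]
    have hCS : ∑ k, Real.sqrt (a k) ≤
        Real.sqrt ((2:ℝ) ^ (d * l) * ∑ k, a k) := by
      have h1 : (∑ k, Real.sqrt (a k)) ^ 2 ≤
          (Fintype.card (Fin d → Fin (2 ^ l)) : ℝ) * ∑ k, (Real.sqrt (a k)) ^ 2 := by
        simpa using sq_sum_le_card_mul_sum_sq
          (s := (Finset.univ : Finset (Fin d → Fin (2 ^ l)))) (f := fun k => Real.sqrt (a k))
      have h2 : ∑ k, (Real.sqrt (a k)) ^ 2 = ∑ k, a k :=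
        Finset.sum_congr rfl fun k _ => Real.sq_sqrt (ha0 k)
      calc ∑ k, Real.sqrt (a k)
          = Real.sqrt ((∑ k, Real.sqrt (a k)) ^ 2) := by
            rw [Real.sqrt_sq (Finset.sum_nonneg fun k _ => Real.sqrt_nonneg _)]
        _ ≤ Real.sqrt ((2:ℝ) ^ (d * l) * ∑ k, a k) := by
            apply Real.sqrt_le_sqrt
            rw [← card_eq, ← h2]
            exact h1
    have hsqrt2 : Real.sqrt ((2:ℝ) ^ (d * l)) = (2:ℝ) ^ (((d * l : ℕ) : ℝ) / 2) := by
      rw [Real.sqrt_eq_rpow, ← Real.rpow_natCast 2 (d * l),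
        ← Real.rpow_mul (by norm_num : (0:ℝ) ≤ 2)]
      congr 1
      ring
    calc ∑ k, ∫ ω, |((wEmp ξ fun j => X j ω) (A k)).toReal - ((wMix ξ μ) (A k)).toReal| ∂P
        ≤ ∑ k, Real.sqrt (a k / Nw) := Finset.sum_le_sum fun k _ => (hpc k).2
      _ = ∑ k, Real.sqrt (a k) * (Real.sqrt Nw)⁻¹ := by
          refine Finset.sum_congr rfl fun k _ => ?_
          rw [Real.sqrt_div (ha0 k), div_eq_mul_inv]
      _ = (∑ k, Real.sqrt (a k)) * (Real.sqrt Nw)⁻¹ := by rw [← Finset.sum_mul]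
      _ ≤ Real.sqrt ((2:ℝ) ^ (d * l) * ∑ k, a k) * (Real.sqrt Nw)⁻¹ := by
          apply mul_le_mul_of_nonneg_right hCS (by positivity)
      _ ≤ Real.sqrt ((2:ℝ) ^ (d * l) * ((wMix ξ μ) (Bset d n)).toReal) * (Real.sqrt Nw)⁻¹ := by
          apply mul_le_mul_of_nonneg_right _ (by positivity)
          apply Real.sqrt_le_sqrt
          apply mul_le_mul_of_nonneg_left hsum_toReal (by positivity)
      _ = (2:ℝ) ^ (((d * l : ℕ) : ℝ) / 2) *
            Real.sqrt (((wMix ξ μ) (Bset d n)).toReal / Nw) := by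
          rw [Real.sqrt_mul (by positivity), hsqrt2,
            Real.sqrt_div ENNReal.toReal_nonneg, div_eq_mul_inv]
          ring

end
end

section
/- Let G and (G_N)_{N∈ℕ} be graphons such that ‖G(u,·)‖₁ > 0 for a.e. u ∈ [0,1], ∫₀¹ ‖G(u,·)‖₁^{−1} du < ∞, and ‖G_N − G‖_□ → 0 as N → ∞. For each N define Ã_N := { u ∈ [0,1] : ‖G_N(u,·)‖₁ ≥ ½ ‖G(u,·)‖₁ }. Then (i) sup_N ∫_{Ã_N} ‖G_N(u,·)‖₁^{−1} du ≤ 2 ∫₀¹ ‖G(u,·)‖₁^{−1} du < ∞, and (ii) the Lebesgue measure of the complement [0,1] ∖ Ã_N tends to 0 as N → ∞. -/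
open MeasureTheory ENNReal Set Filter

noncomputable section

/-- The degree function `‖G(u,·)‖₁ = ∫₀¹ G(u,v) dv` of a graphon. -/
def deg (G : ℝ → ℝ → ℝ) (u : ℝ) : ℝ := ∫ v in Set.Icc (0:ℝ) 1, G u v

/-- A graphon: a symmetric measurable function `[0,1]² → [0,1]`
(represented as a total function on `ℝ²`). -/
structure IsGraphon (G : ℝ → ℝ → ℝ) : Prop where
  measurable : Measurable (Function.uncurry G)
  symm : ∀ u v, G u v = G v u
  mem_Icc : ∀ u ∈ Set.Icc (0:ℝ) 1, ∀ v ∈ Set.Icc (0:ℝ) 1, G u v ∈ Set.Icc (0:ℝ) 1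

/-- The class `M(ℝ^d)`: families `(μ^u)_{u∈[0,1]}` of probability measures with
setwise measurable dependence on `u` and uniformly bounded second moments. -/
structure MemM (d : ℕ) (μ : ℝ → Measure (Ed d)) : Prop where
  prob : ∀ u ∈ Set.Icc (0:ℝ) 1, IsProbabilityMeasure (μ u)
  meas : ∀ B : Set (Ed d), MeasurableSet B → Measurable fun u => μ u B
  moment : (⨆ u ∈ Set.Icc (0:ℝ) 1, ∫⁻ x, (‖x‖₊ : ℝ≥0∞) ^ 2 ∂(μ u)) < ⊤

/-- The graphon-averaged measure `[Gμ]^u = ‖G(u,·)‖₁⁻¹ ∫₀¹ G(u,v) μ^v dv`. -/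
def graphonAvg {d : ℕ} (G : ℝ → ℝ → ℝ) (μ : ℝ → Measure (Ed d)) (u : ℝ) :
    Measure (Ed d) :=
  Measure.bind
    ((volume.restrict (Set.Icc (0:ℝ) 1)).withDensity
      fun v => ENNReal.ofReal (G u v) / ENNReal.ofReal (deg G u)) μ


/-- The cut norm `‖F‖_□ = sup_{S,S' ⊆ [0,1] measurable} |∫_{S×S'} F(u,v) du dv|`. -/
def cutNorm (F : ℝ → ℝ → ℝ) : ℝ :=
  ⨆ (S : Set ℝ) (_ : MeasurableSet S) (S' : Set ℝ) (_ : MeasurableSet S'),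
    |∫ u in Set.Icc (0:ℝ) 1 ∩ S, ∫ v in Set.Icc (0:ℝ) 1 ∩ S', F u v|

lemma measurable_deg {G : ℝ → ℝ → ℝ} (hG : Measurable (Function.uncurry G)) :
    Measurable (deg G) :=
  (hG.stronglyMeasurable.integral_prod_right (ν := volume.restrict (Set.Icc (0:ℝ) 1))).measurable

lemma integrable_slice {G : ℝ → ℝ → ℝ} (hG : IsGraphon G) {u : ℝ} (hu : u ∈ Set.Icc (0:ℝ) 1) :
    IntegrableOn (G u) (Set.Icc (0:ℝ) 1) := by
  refine ⟨(hG.measurable.of_uncurry_left).aestronglyMeasurable, ?_⟩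
  apply HasFiniteIntegral.of_bounded (C := 1)
  filter_upwards [ae_restrict_mem measurableSet_Icc] with v hv
  have := hG.mem_Icc u hu v hv
  rw [Real.norm_eq_abs, abs_le]
  constructor <;> linarith [this.1, this.2]

lemma deg_mem {G : ℝ → ℝ → ℝ} (hG : IsGraphon G) {u : ℝ} (hu : u ∈ Set.Icc (0:ℝ) 1) :
    deg G u ∈ Set.Icc (0:ℝ) 1 := by
  constructor
  · exact setIntegral_nonneg measurableSet_Icc fun v hv => (hG.mem_Icc u hu v hv).1
  · calc deg G u ≤ ∫ v in Set.Icc (0:ℝ) 1, 1 := by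
          apply setIntegral_mono_on (integrable_slice hG hu) (integrable_const 1)
            measurableSet_Icc fun v hv => (hG.mem_Icc u hu v hv).2
    _ = 1 := by simp

lemma abs_le_cutNorm {F : ℝ → ℝ → ℝ}
    (hF : ∀ u ∈ Set.Icc (0:ℝ) 1, ∀ v ∈ Set.Icc (0:ℝ) 1, |F u v| ≤ 1)
    (hFm : Measurable (Function.uncurry F))
    {S S' : Set ℝ} (hS : MeasurableSet S) (hS' : MeasurableSet S') :
    |∫ u in Set.Icc (0:ℝ) 1 ∩ S, ∫ v in Set.Icc (0:ℝ) 1 ∩ S', F u v| ≤ cutNorm F := by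
  have key : ∀ T T' : Set ℝ,
      |∫ u in Set.Icc (0:ℝ) 1 ∩ T, ∫ v in Set.Icc (0:ℝ) 1 ∩ T', F u v| ≤ 1 := by
    intro T T'
    have hfin : volume (Set.Icc (0:ℝ) 1 ∩ T) < ⊤ :=
      lt_of_le_of_lt (measure_mono Set.inter_subset_left) (by simp)
    have h1 : ∀ u ∈ Set.Icc (0:ℝ) 1 ∩ T, ‖∫ v in Set.Icc (0:ℝ) 1 ∩ T', F u v‖ ≤ 1 := by
      intro u hu
      have hfin' : volume (Set.Icc (0:ℝ) 1 ∩ T') < ⊤ :=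
        lt_of_le_of_lt (measure_mono Set.inter_subset_left) (by simp)
      have := norm_setIntegral_le_of_norm_le_const_ae' (f := F u) (C := 1) hfin'
        (by filter_upwards with v hv
            rw [Real.norm_eq_abs]; exact hF u hu.1 v hv.1)
      refine this.trans ?_
      rw [one_mul, ← ENNReal.toReal_one]
      exact ENNReal.toReal_mono (by simp) (le_trans (measure_mono Set.inter_subset_left) (by simp))
    have := norm_setIntegral_le_of_norm_le_const_ae' (C := 1) hfin
      (by filter_upwards with u hu; exact h1 u hu)
    rw [← Real.norm_eq_abs]
    refine this.trans ?_
    rw [one_mul, ← ENNReal.toReal_one]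
    exact ENNReal.toReal_mono (by simp) (le_trans (measure_mono Set.inter_subset_left) (by simp))
  have bdd2 : ∀ T : Set ℝ, BddAbove (Set.range fun S' : Set ℝ =>
      ⨆ (_ : MeasurableSet S'), |∫ u in Set.Icc (0:ℝ) 1 ∩ T, ∫ v in Set.Icc (0:ℝ) 1 ∩ S', F u v|) := by
    intro T
    refine ⟨1, ?_⟩
    rintro x ⟨T', rfl⟩
    exact Real.iSup_le (fun _ => key T T') zero_le_one
  have bdd1 : BddAbove (Set.range fun S : Set ℝ =>
      ⨆ (_ : MeasurableSet S) (S' : Set ℝ) (_ : MeasurableSet S'),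
        |∫ u in Set.Icc (0:ℝ) 1 ∩ S, ∫ v in Set.Icc (0:ℝ) 1 ∩ S', F u v|) := by
    refine ⟨1, ?_⟩
    rintro x ⟨T, rfl⟩
    refine Real.iSup_le (fun _ => ?_) zero_le_one
    exact Real.iSup_le (fun T' => Real.iSup_le (fun _ => key T T') zero_le_one) zero_le_one
  calc |∫ u in Set.Icc (0:ℝ) 1 ∩ S, ∫ v in Set.Icc (0:ℝ) 1 ∩ S', F u v|
      ≤ ⨆ (_ : MeasurableSet S'), |∫ u in Set.Icc (0:ℝ) 1 ∩ S, ∫ v in Set.Icc (0:ℝ) 1 ∩ S', F u v| :=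
        le_ciSup_of_le (by exact ⟨1, by rintro x ⟨_, rfl⟩; exact key S S'⟩) hS' le_rfl
    _ ≤ ⨆ (S' : Set ℝ) (_ : MeasurableSet S'),
          |∫ u in Set.Icc (0:ℝ) 1 ∩ S, ∫ v in Set.Icc (0:ℝ) 1 ∩ S', F u v| :=
        le_ciSup (bdd2 S) S'
    _ ≤ ⨆ (_ : MeasurableSet S) (S' : Set ℝ) (_ : MeasurableSet S'),
          |∫ u in Set.Icc (0:ℝ) 1 ∩ S, ∫ v in Set.Icc (0:ℝ) 1 ∩ S', F u v| := by
        refine le_ciSup_of_le ?_ hS le_rfl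
        refine ⟨1, ?_⟩
        rintro x ⟨_, rfl⟩
        exact Real.iSup_le (fun T' => Real.iSup_le (fun _ => key S T') zero_le_one) zero_le_one
    _ ≤ cutNorm F := le_ciSup bdd1 S

lemma integrableOn_deg {G : ℝ → ℝ → ℝ} (hG : IsGraphon G) {s : Set ℝ}
    (hsm : MeasurableSet s) (hsub : s ⊆ Set.Icc (0:ℝ) 1) :
    IntegrableOn (deg G) s := by
  haveI : IsFiniteMeasure (volume.restrict s) := ⟨by
    rw [Measure.restrict_apply_univ]
    exact lt_of_le_of_lt (measure_mono hsub) (by simp)⟩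
  refine ⟨(measurable_deg hG.measurable).aestronglyMeasurable, ?_⟩
  apply HasFiniteIntegral.of_bounded (C := 1)
  filter_upwards [ae_restrict_mem hsm] with u hu
  have := deg_mem hG (hsub hu)
  rw [Real.norm_eq_abs, abs_le]
  constructor <;> linarith [this.1, this.2]

/-- if `‖G_N − G‖_□ → 0`, `deg G > 0` a.e. and `deg G⁻¹` is integrable, then on
`Ã_N = {u : deg G_N(u) ≥ deg G(u)/2}` the reciprocal degrees of `G_N` are uniformly
integrable (bounded by `2∫ deg G⁻¹ < ∞`), and `λ([0,1] ∖ Ã_N) → 0`. -/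
theorem stmt_9 (G : ℝ → ℝ → ℝ) (GN : ℕ → ℝ → ℝ → ℝ)
    (hG : IsGraphon G) (hGN : ∀ N, IsGraphon (GN N))
    (hpos : ∀ᵐ u ∂(volume.restrict (Set.Icc (0:ℝ) 1)), 0 < deg G u)
    (hint : ∫⁻ u in Set.Icc (0:ℝ) 1, (ENNReal.ofReal (deg G u))⁻¹ < ⊤)
    (hcut : Filter.Tendsto (fun N => cutNorm fun u v => GN N u v - G u v)
      Filter.atTop (nhds 0)) :
    (∀ N, ∫⁻ u in {u ∈ Set.Icc (0:ℝ) 1 | deg G u / 2 ≤ deg (GN N) u},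
          (ENNReal.ofReal (deg (GN N) u))⁻¹ ≤
        2 * ∫⁻ u in Set.Icc (0:ℝ) 1, (ENNReal.ofReal (deg G u))⁻¹) ∧
    (2 * ∫⁻ u in Set.Icc (0:ℝ) 1, (ENNReal.ofReal (deg G u))⁻¹ < ⊤) ∧
    Filter.Tendsto
      (fun N => volume
        (Set.Icc (0:ℝ) 1 \ {u ∈ Set.Icc (0:ℝ) 1 | deg G u / 2 ≤ deg (GN N) u}))
      Filter.atTop (nhds 0) := by
  have mdG : Measurable (deg G) := measurable_deg hG.measurable
  have mdGN : ∀ N, Measurable (deg (GN N)) := fun N => measurable_deg (hGN N).measurable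
  set A : ℕ → Set ℝ := fun N => {u ∈ Set.Icc (0:ℝ) 1 | deg G u / 2 ≤ deg (GN N) u} with hA
  have hAeq : ∀ N, A N = Set.Icc (0:ℝ) 1 ∩ {u | deg G u / 2 ≤ deg (GN N) u} := fun N => rfl
  have hAmeas : ∀ N, MeasurableSet (A N) := fun N => by
    rw [hAeq]
    exact measurableSet_Icc.inter (measurableSet_le (mdG.div_const 2) (mdGN N))
  refine ⟨?_, ?_, ?_⟩
  · -- Part 1
    intro N
    calc ∫⁻ u in A N, (ENNReal.ofReal (deg (GN N) u))⁻¹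
        ≤ ∫⁻ u in A N, 2 * (ENNReal.ofReal (deg G u))⁻¹ := by
          apply setLIntegral_mono' (hAmeas N)
          intro u hu
          have h2 : ENNReal.ofReal (deg G u / 2) ≤ ENNReal.ofReal (deg (GN N) u) :=
            ENNReal.ofReal_le_ofReal hu.2
          have h3 : (ENNReal.ofReal (deg (GN N) u))⁻¹ ≤ (ENNReal.ofReal (deg G u / 2))⁻¹ :=
            ENNReal.inv_le_inv.mpr h2
          refine h3.trans_eq ?_
          rw [ENNReal.ofReal_div_of_pos (by norm_num), ENNReal.inv_div
            (Or.inl (by simp)) (Or.inl (by simp)), div_eq_mul_inv]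
          norm_num
      _ ≤ ∫⁻ u in Set.Icc (0:ℝ) 1, 2 * (ENNReal.ofReal (deg G u))⁻¹ :=
          lintegral_mono_set (fun u hu => hu.1)
      _ = 2 * ∫⁻ u in Set.Icc (0:ℝ) 1, (ENNReal.ofReal (deg G u))⁻¹ :=
          lintegral_const_mul' 2 _ (by simp)
  · exact ENNReal.mul_lt_top (by simp) hint
  · -- Part 3
    set B : ℕ → Set ℝ := fun N => Set.Icc (0:ℝ) 1 \ A N with hB
    have hBmeas : ∀ N, MeasurableSet (B N) := fun N => measurableSet_Icc.diff (hAmeas N)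
    have hBsub : ∀ N, B N ⊆ Set.Icc (0:ℝ) 1 := fun N => Set.diff_subset
    have hBlt : ∀ N, ∀ u ∈ B N, deg (GN N) u < deg G u / 2 := by
      intro N u hu
      by_contra h
      exact hu.2 ⟨hu.1, not_lt.mp h⟩
    set L : ℕ → ℝ≥0∞ := fun N => ∫⁻ u in B N, ENNReal.ofReal (deg G u) with hL
    set c : ℕ → ℝ := fun N => cutNorm fun u v => GN N u v - G u v with hc
    -- key bound : L N ≤ ofReal (2 * c N)
    have hkey : ∀ N, L N ≤ ENNReal.ofReal (2 * c N) := by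
      intro N
      have hFbnd : ∀ u ∈ Set.Icc (0:ℝ) 1, ∀ v ∈ Set.Icc (0:ℝ) 1, |GN N u v - G u v| ≤ 1 := by
        intro u hu v hv
        have h1 := (hGN N).mem_Icc u hu v hv
        have h2 := hG.mem_Icc u hu v hv
        rw [abs_le]; constructor <;> linarith [h1.1, h1.2, h2.1, h2.2]
      have hFm : Measurable (Function.uncurry fun u v => GN N u v - G u v) :=
        (hGN N).measurable.sub hG.measurable
      have habs := abs_le_cutNorm hFbnd hFm (hBmeas N) MeasurableSet.univ
      rw [Set.inter_univ, Set.inter_eq_self_of_subset_right (hBsub N)] at habs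
      have hinner : ∀ u ∈ B N,
          ∫ v in Set.Icc (0:ℝ) 1, (GN N u v - G u v) = deg (GN N) u - deg G u := by
        intro u hu
        exact integral_sub (integrable_slice (hGN N) (hBsub N hu)) (integrable_slice hG (hBsub N hu))
      rw [setIntegral_congr_fun (hBmeas N) hinner] at habs
      have intG : IntegrableOn (deg G) (B N) := integrableOn_deg hG (hBmeas N) (hBsub N)
      have intGN : IntegrableOn (deg (GN N)) (B N) := integrableOn_deg (hGN N) (hBmeas N) (hBsub N)
      have hreal : ∫ u in B N, deg G u ≤ 2 * c N := by
        have intSub : IntegrableOn (fun u => 2 * (deg G u - deg (GN N) u)) (B N) volume :=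
          (intG.sub intGN).const_mul 2
        have h1 : ∫ u in B N, deg G u ≤ ∫ u in B N, 2 * (deg G u - deg (GN N) u) := by
          apply setIntegral_mono_on intG intSub (hBmeas N)
          intro u hu
          have := hBlt N u hu
          show deg G u ≤ 2 * (deg G u - deg (GN N) u)
          linarith
        have h2 : ∫ u in B N, 2 * (deg G u - deg (GN N) u)
            = 2 * ∫ u in B N, (deg G u - deg (GN N) u) := integral_const_mul 2 _
        have h3 : ∫ u in B N, (deg G u - deg (GN N) u)
            = -∫ u in B N, (deg (GN N) u - deg G u) := by
          rw [← integral_neg]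
          congr 1 with u
          ring
        have h4 : -∫ u in B N, (deg (GN N) u - deg G u) ≤ c N :=
          (neg_le_abs _).trans habs
        calc ∫ u in B N, deg G u ≤ 2 * ∫ u in B N, (deg G u - deg (GN N) u) := h1.trans_eq h2
          _ ≤ 2 * c N := by rw [h3]; linarith
      have hnn : 0 ≤ᵐ[volume.restrict (B N)] deg G := by
        filter_upwards [ae_restrict_mem (hBmeas N)] with u hu
        exact (deg_mem hG (hBsub N hu)).1
      calc L N = ENNReal.ofReal (∫ u in B N, deg G u) :=
            (ofReal_integral_eq_lintegral_ofReal intG hnn).symm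
        _ ≤ ENNReal.ofReal (2 * c N) := ENNReal.ofReal_le_ofReal hreal
    have hL0 : Tendsto L atTop (nhds 0) := by
      have hc0 : Tendsto (fun N => ENNReal.ofReal (2 * c N)) atTop (nhds 0) := by
        have : Tendsto (fun N => 2 * c N) atTop (nhds 0) := by
          simpa using hcut.const_mul 2
        simpa [Function.comp_def] using (ENNReal.continuous_ofReal.tendsto 0).comp this
      exact tendsto_of_tendsto_of_tendsto_of_le_of_le tendsto_const_nhds hc0
        (fun N => zero_le) hkey
    -- conclude
    rw [ENNReal.tendsto_nhds_zero]
    intro ε hε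
    rcases eq_top_or_lt_top ε with rfl | hεtop
    · filter_upwards with N using le_top
    set Cs : ℕ → Set ℝ := fun n => {u ∈ Set.Icc (0:ℝ) 1 | deg G u < 1 / (n + 1)} with hCs
    have hCeq : ∀ n, Cs n = Set.Icc (0:ℝ) 1 ∩ {u | deg G u < 1 / (n + 1)} := fun n => rfl
    have hCmeas : ∀ n, MeasurableSet (Cs n) := fun n => by
      rw [hCeq]
      exact measurableSet_Icc.inter (measurableSet_lt mdG measurable_const)
    have hCanti : Antitone Cs := by
      intro m n hmn u hu
      refine ⟨hu.1, lt_of_lt_of_le hu.2 ?_⟩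
      apply one_div_le_one_div_of_le (by positivity)
      exact_mod_cast by exact_mod_cast add_le_add_left (Nat.cast_le.mpr hmn) 1
    have hCnull : volume (⋂ n, Cs n) = 0 := by
      have h0 : volume ({u | ¬ 0 < deg G u} ∩ Set.Icc (0:ℝ) 1) = 0 := by
        have := ae_iff.mp hpos
        rwa [Measure.restrict_apply (by
          exact (measurableSet_lt measurable_const mdG).compl)] at this
      refine measure_mono_null ?_ h0
      intro u hu
      have hu0 := Set.mem_iInter.mp hu 0
      refine ⟨?_, hu0.1⟩
      intro hlt
      obtain ⟨n, hn⟩ := exists_nat_one_div_lt hlt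
      exact absurd (Set.mem_iInter.mp hu n).2 (not_lt.mpr hn.le)
    have hCtend : Tendsto (fun n => volume (Cs n)) atTop (nhds 0) := by
      have := tendsto_measure_iInter_atTop (μ := volume)
        (fun n => (hCmeas n).nullMeasurableSet) hCanti
        ⟨0, (lt_of_le_of_lt (measure_mono (fun u hu => hu.1))
          (by simp : volume (Set.Icc (0:ℝ) 1) < ⊤)).ne⟩
      rwa [hCnull] at this
    have hhalf : (0:ℝ≥0∞) < ε / 2 := ENNReal.half_pos hε.ne'
    obtain ⟨n, hn⟩ := (hCtend.eventually_lt_const hhalf).exists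
    set δ : ℝ := 1 / (n + 1) with hδ
    have hδpos : 0 < δ := by positivity
    have hmul_pos : 0 < ENNReal.ofReal δ * (ε / 2) :=
      ENNReal.mul_pos (ENNReal.ofReal_pos.mpr hδpos).ne' hhalf.ne'
    filter_upwards [hL0.eventually_lt_const hmul_pos] with N hLN
    have hsplit : volume (B N) ≤ volume (B N ∩ Cs n) + volume (B N \ Cs n) :=
      measure_le_inter_add_diff _ _ _
    have h1 : volume (B N ∩ Cs n) ≤ ε / 2 :=
      le_trans (measure_mono Set.inter_subset_right) hn.le
    have h2 : volume (B N \ Cs n) ≤ ε / 2 := by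
      have hbnd : ENNReal.ofReal δ * volume (B N \ Cs n) ≤ L N := by
        have hmono : ∫⁻ _ in B N \ Cs n, ENNReal.ofReal δ
            ≤ ∫⁻ u in B N \ Cs n, ENNReal.ofReal (deg G u) := by
          apply setLIntegral_mono' ((hBmeas N).diff (hCmeas n))
          intro u hu
          apply ENNReal.ofReal_le_ofReal
          by_contra h
          exact hu.2 ⟨hBsub N hu.1, not_le.mp h⟩
        calc ENNReal.ofReal δ * volume (B N \ Cs n)
            = ∫⁻ _ in B N \ Cs n, ENNReal.ofReal δ := (setLIntegral_const _ _).symm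
          _ ≤ ∫⁻ u in B N \ Cs n, ENNReal.ofReal (deg G u) := hmono
          _ ≤ L N := lintegral_mono_set Set.diff_subset
      have hlt : ENNReal.ofReal δ * volume (B N \ Cs n) < ENNReal.ofReal δ * (ε / 2) :=
        lt_of_le_of_lt hbnd hLN
      exact le_of_lt ((ENNReal.mul_lt_mul_iff_right (ENNReal.ofReal_pos.mpr hδpos).ne'
        ENNReal.ofReal_ne_top).mp hlt)
    calc volume (B N) ≤ volume (B N ∩ Cs n) + volume (B N \ Cs n) := hsplit
      _ ≤ ε / 2 + ε / 2 := add_le_add h1 h2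
      _ = ε := ENNReal.add_halves ε

end
end

section
/- Let n ∈ ℕ, let J_1, …, J_n be intervals covering [0,1], let K > 0, and let G : [0,1]² → [0,1] satisfy |G(u,v) − G(u',v')| ≤ K(|u−u'| + |v−v'|) whenever (u,v) and (u',v') lie in the same block J_i × J_j. For N ∈ ℕ let G_N(u,v) := G(⌈Nu⌉/N, ⌈Nv⌉/N) and u_i := i/N. Then there exists a constant C, depending only on K and n, such that for all N ∈ ℕ and all i ∈ {1,…,N}: | ‖G(u_i,·)‖₁ − ‖G_N(u_i,·)‖₁ | ≤ C/N. -/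
open MeasureTheory Set Filter

noncomputable section

/-- The step graphon `G_N(u,v) = G(⌈Nu⌉/N, ⌈Nv⌉/N)` associated with `G`. -/
def stepG (G : ℝ → ℝ → ℝ) (N : ℕ) (u v : ℝ) : ℝ :=
  G ((⌈(N : ℝ) * u⌉ : ℝ) / N) ((⌈(N : ℝ) * v⌉ : ℝ) / N)

/-- for a blockwise `K`-Lipschitz kernel `G : [0,1]² → [0,1]`, the degrees of
the step graphon `G_N` approximate those of `G` at the grid points at rate `C/N`,
with `C = C(K,n)`. -/
theorem stmt_12 (n : ℕ) (K : ℝ) (hK : 0 < K) :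
    ∃ C : ℝ, ∀ (G : ℝ → ℝ → ℝ) (J : Fin n → Set ℝ),
      (∀ i, (J i).OrdConnected) → Set.Icc (0:ℝ) 1 ⊆ (⋃ i, J i) →
      (∀ u ∈ Set.Icc (0:ℝ) 1, ∀ v ∈ Set.Icc (0:ℝ) 1, G u v ∈ Set.Icc (0:ℝ) 1) →
      (∀ i j : Fin n, ∀ u ∈ J i, ∀ u' ∈ J i, ∀ v ∈ J j, ∀ v' ∈ J j,
        |G u v - G u' v'| ≤ K * (|u - u'| + |v - v'|)) →
      ∀ N i : ℕ, 1 ≤ i → i ≤ N →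
        |deg G ((i : ℝ) / N) - deg (stepG G N) ((i : ℝ) / N)| ≤ C / N := by
  refine ⟨K + n, ?_⟩
  intro G J hJc hJcover hG hLip N i hi hiN
  have hN : 1 ≤ N := le_trans hi hiN
  have hN0 : (0:ℝ) < N := by exact_mod_cast Nat.lt_of_lt_of_le Nat.zero_lt_one hN
  set u : ℝ := (i : ℝ) / N with hu
  have hu01 : u ∈ Icc (0:ℝ) 1 := ⟨div_nonneg (Nat.cast_nonneg i) hN0.le,
    (div_le_one hN0).mpr (by exact_mod_cast hiN)⟩
  obtain ⟨j₀, hj₀⟩ := mem_iUnion.mp (hJcover hu01)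
  -- the rounding function
  set c : ℝ → ℝ := fun v => ((⌈(N:ℝ) * v⌉ : ℤ) : ℝ) / N with hcdef
  have hceil_meas : Measurable fun v : ℝ => (⌈(N:ℝ) * v⌉ : ℤ) :=
    (measurable_const.mul measurable_id).ceil
  have hc_meas : Measurable c :=
    (measurable_from_top (f := fun k : ℤ => ((k : ℝ) / N))).comp hceil_meas
  have hc_ge : ∀ v : ℝ, v ≤ c v := by
    intro v
    rw [hcdef]
    rw [le_div_iff₀ hN0, mul_comm]
    exact Int.le_ceil _
  have hc_le : ∀ v : ℝ, c v ≤ v + 1 / N := by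
    intro v
    rw [hcdef]
    rw [div_le_iff₀ hN0]
    have := (Int.ceil_lt_add_one ((N:ℝ) * v)).le
    calc ((⌈(N:ℝ) * v⌉ : ℤ) : ℝ) ≤ (N:ℝ) * v + 1 := this
      _ = (v + 1 / N) * N := by field_simp
  have hc_mem : ∀ v ∈ Icc (0:ℝ) 1, c v ∈ Icc (0:ℝ) 1 := by
    intro v hv
    refine ⟨le_trans hv.1 (hc_ge v), ?_⟩
    rw [hcdef]
    rw [div_le_one hN0]
    have h1 : (⌈(N:ℝ) * v⌉ : ℤ) ≤ (N : ℤ) := by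
      apply Int.ceil_le.mpr
      push_cast
      nlinarith [hv.2]
    exact_mod_cast h1
  set f : ℝ → ℝ := fun v => G u v with hfdef
  set g : ℝ → ℝ := fun v => G u (c v) with hgdef
  -- step graphon at grid point
  have hstep : ∀ v : ℝ, stepG G N u v = g v := by
    intro v
    have h1 : (N : ℝ) * u = (i : ℝ) := by rw [hu]; field_simp
    have h2 : (⌈(N:ℝ) * u⌉ : ℤ) = (i : ℤ) := by rw [h1]; exact_mod_cast Int.ceil_natCast i
    simp only [stepG, hgdef, hcdef, h2]
    norm_num
    rfl
  -- measurability of f on [0,1]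
  have hf_ae : AEMeasurable f (volume.restrict (Icc (0:ℝ) 1)) := by
    have h1 : ∀ j : Fin n, AEMeasurable f (volume.restrict (J j)) := by
      intro j
      have hlip : LipschitzOnWith (Real.toNNReal K) f (J j) := by
        apply LipschitzOnWith.of_dist_le_mul
        intro x hx y hy
        have hb := hLip j₀ j u hj₀ u hj₀ x hx y hy
        simp only [Real.dist_eq]
        rw [Real.coe_toNNReal K hK.le]
        calc |f x - f y| ≤ K * (|u - u| + |x - y|) := hb
          _ = K * |x - y| := by simp
      exact hlip.continuousOn.aemeasurable (hJc j).measurableSet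
    have h2 : AEMeasurable f (volume.restrict (⋃ j, J j)) := aemeasurable_iUnion_iff.mpr h1
    exact h2.mono_measure (Measure.restrict_mono hJcover le_rfl)
  have hg_meas : Measurable g := by
    have : g = (fun k : ℤ => G u ((k : ℝ) / N)) ∘ (fun v : ℝ => (⌈(N:ℝ) * v⌉ : ℤ)) := rfl
    rw [this]
    exact measurable_from_top.comp hceil_meas
  -- bounds
  have hf_bd : ∀ v ∈ Icc (0:ℝ) 1, f v ∈ Icc (0:ℝ) 1 := fun v hv => hG u hu01 v hv
  have hg_bd : ∀ v ∈ Icc (0:ℝ) 1, g v ∈ Icc (0:ℝ) 1 := fun v hv => hG u hu01 (c v) (hc_mem v hv)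
  haveI : IsFiniteMeasure (volume.restrict (Icc (0:ℝ) 1)) := by
    constructor
    rw [Measure.restrict_apply_univ, Real.volume_Icc]
    simp
  have hf_int : Integrable f (volume.restrict (Icc (0:ℝ) 1)) := by
    refine ⟨hf_ae.aestronglyMeasurable, ?_⟩
    apply HasFiniteIntegral.of_bounded (C := 1)
    filter_upwards [ae_restrict_mem measurableSet_Icc] with v hv
    have h := hf_bd v hv
    rw [Real.norm_eq_abs, abs_le]
    exact ⟨by linarith [h.1], h.2⟩
  have hg_int : Integrable g (volume.restrict (Icc (0:ℝ) 1)) := by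
    refine ⟨hg_meas.aestronglyMeasurable, ?_⟩
    apply HasFiniteIntegral.of_bounded (C := 1)
    filter_upwards [ae_restrict_mem measurableSet_Icc] with v hv
    have h := hg_bd v hv
    rw [Real.norm_eq_abs, abs_le]
    exact ⟨by linarith [h.1], h.2⟩
  -- the bad set
  set B : Set ℝ := Icc (0:ℝ) 1 ∩ ⋂ j : Fin n, (J j ∩ c ⁻¹' (J j))ᶜ with hBdef
  have hB_meas : MeasurableSet B :=
    measurableSet_Icc.inter (MeasurableSet.iInter fun j =>
      ((hJc j).measurableSet.inter (hc_meas (hJc j).measurableSet)).compl)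
  -- pointwise bound
  have hpt : ∀ v ∈ Icc (0:ℝ) 1, |f v - g v| ≤ K / N + B.indicator (fun _ => (1:ℝ)) v := by
    intro v hv
    by_cases hvB : v ∈ B
    · rw [indicator_of_mem hvB]
      have h1 := hf_bd v hv
      have h2 := hg_bd v hv
      have h3 : (0:ℝ) ≤ K / N := by positivity
      rw [abs_le]
      refine ⟨by linarith [h1.1, h1.2, h2.1, h2.2], by linarith [h1.1, h1.2, h2.1, h2.2]⟩
    · rw [indicator_of_notMem hvB]
      have hex : ∃ j : Fin n, v ∈ J j ∧ c v ∈ J j := by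
        by_contra hcon
        push_neg at hcon
        apply hvB
        refine ⟨hv, mem_iInter.mpr fun j => ?_⟩
        intro hmem
        exact hcon j hmem.1 hmem.2
      obtain ⟨j, hvj, hcvj⟩ := hex
      have hb := hLip j₀ j u hj₀ u hj₀ v hvj (c v) hcvj
      have h1 : |v - c v| ≤ 1 / N := by
        rw [abs_le]
        constructor
        · linarith [hc_le v]
        · linarith [hc_ge v, one_div_pos.mpr hN0]
      calc |f v - g v| = |G u v - G u (c v)| := rfl
        _ ≤ K * (|u - u| + |v - c v|) := hb
        _ = K * |v - c v| := by simp
        _ ≤ K * (1 / N) := mul_le_mul_of_nonneg_left h1 hK.le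
        _ = K / N := by ring
        _ ≤ K / N + 0 := by ring_nf; exact le_rfl
  -- measure of the bad set
  have hBsub : B ⊆ ⋃ j : Fin n, Icc (sInf (J j) - 1 / N) (sInf (J j)) := by
    intro v hvB
    obtain ⟨hv, hvI⟩ := hvB
    obtain ⟨j, hj⟩ := mem_iUnion.mp (hJcover (hc_mem v hv))
    have hvnj : v ∉ J j := by
      intro hvj
      exact (mem_iInter.mp hvI j) ⟨hvj, hj⟩
    have hgt : ∀ w ∈ J j, v < w := by
      intro w hw
      by_contra hle
      push_neg at hle
      exact hvnj ((hJc j).out hw hj ⟨hle, hc_ge v⟩)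
    have hbdd : BddBelow (J j) := ⟨v, fun w hw => (hgt w hw).le⟩
    have h1 : v ≤ sInf (J j) := le_csInf ⟨c v, hj⟩ (fun w hw => (hgt w hw).le)
    have h2 : sInf (J j) ≤ c v := csInf_le hbdd hj
    refine mem_iUnion.mpr ⟨j, ?_, h1⟩
    have := hc_le v
    linarith
  have hBvol : volume B ≤ ENNReal.ofReal ((n : ℝ) * (1 / N)) := by
    calc volume B ≤ volume (⋃ j : Fin n, Icc (sInf (J j) - 1 / N) (sInf (J j))) :=
          measure_mono hBsub
      _ ≤ ∑ j : Fin n, volume (Icc (sInf (J j) - 1 / N) (sInf (J j))) :=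
          measure_iUnion_fintype_le _ _
      _ = ∑ _j : Fin n, ENNReal.ofReal (1 / N) := by
          apply Finset.sum_congr rfl
          intro j _
          rw [Real.volume_Icc]
          congr 1
          ring
      _ = (n : ℕ) • ENNReal.ofReal (1 / N) := by
          rw [Finset.sum_const, Finset.card_univ, Fintype.card_fin]
      _ = ENNReal.ofReal ((n : ℝ) * (1 / N)) := by
          rw [nsmul_eq_mul, ENNReal.ofReal_mul (by positivity)]
          congr 1
          simp
  have hBmeas_le : ((volume.restrict (Icc (0:ℝ) 1)) B).toReal ≤ (n : ℝ) / N := by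
    apply ENNReal.toReal_le_of_le_ofReal (by positivity)
    calc (volume.restrict (Icc (0:ℝ) 1)) B = volume (B ∩ Icc (0:ℝ) 1) :=
          Measure.restrict_apply hB_meas
      _ ≤ volume B := measure_mono inter_subset_left
      _ ≤ ENNReal.ofReal ((n : ℝ) * (1 / N)) := hBvol
      _ = ENNReal.ofReal ((n : ℝ) / N) := by congr 1; ring
  -- integrability of the majorant
  have hind_int : Integrable (B.indicator fun _ => (1:ℝ)) (volume.restrict (Icc (0:ℝ) 1)) :=
    (integrable_const 1).indicator hB_meas
  have hrhs_int : Integrable (fun v => K / N + B.indicator (fun _ => (1:ℝ)) v)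
      (volume.restrict (Icc (0:ℝ) 1)) := (integrable_const _).add hind_int
  -- assembling
  have hdeg2 : deg (stepG G N) u = ∫ v in Icc (0:ℝ) 1, g v := by
    unfold deg
    exact integral_congr_ae (ae_of_all _ fun v => hstep v)
  have hvolIcc : (volume (Icc (0:ℝ) 1)).toReal = 1 := by
    rw [Real.volume_Icc]
    simp
  calc |deg G u - deg (stepG G N) u|
      = |∫ v in Icc (0:ℝ) 1, (f v - g v)| := by
        rw [hdeg2, integral_sub hf_int hg_int]
        rfl
    _ ≤ ∫ v in Icc (0:ℝ) 1, |f v - g v| := by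
        simpa [Real.norm_eq_abs] using
          norm_integral_le_integral_norm (μ := volume.restrict (Icc (0:ℝ) 1))
            (fun v => f v - g v)
    _ ≤ ∫ v in Icc (0:ℝ) 1, (K / N + B.indicator (fun _ => (1:ℝ)) v) :=
        setIntegral_mono_on (hf_int.sub hg_int).abs hrhs_int measurableSet_Icc hpt
    _ = (K / N) * (volume (Icc (0:ℝ) 1)).toReal
        + ((volume.restrict (Icc (0:ℝ) 1)) B).toReal := by
        rw [integral_add (integrable_const _) hind_int]
        congr 1
        · rw [integral_const, measureReal_restrict_apply_univ, measureReal_def, smul_eq_mul, mul_comm]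
        · rw [integral_indicator hB_meas]
          simp [Measure.restrict_restrict hB_meas, measureReal_def]
    _ ≤ K / N + (n : ℝ) / N := by
        rw [hvolIcc, mul_one]
        exact add_le_add le_rfl hBmeas_le
    _ = (K + n) / N := by ring
end
end

section
/- Let n ∈ ℕ, let J_1, …, J_n be intervals covering [0,1], let K > 0, and let G : [0,1]² → [0,1] be a graphon which is blockwise K-Lipschitz on the blocks J_i × J_j and satisfies the uniform degree lower bound G_∞ := inf_{u∈[0,1]} ‖G(u,·)‖₁ > 0. For N ∈ ℕ let G_N(u,v) := G(⌈Nu⌉/N, ⌈Nv⌉/N) and u_i := i/N. Then there exist a constant C > 0 (depending only on K, n, G_∞) and N₀ ∈ ℕ such that for all N ≥ N₀ and all i ∈ {1,…,N}: ∫₀¹ | G(u_i,v)/‖G(u_i,·)‖₁ − G_N(u_i,v)/‖G_N(u_i,·)‖₁ | dv ≤ C/N; in particular ‖G_N(u_i,·)‖₁ ≥ G_∞/2 for all such N and i. -/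
open MeasureTheory Set Filter

noncomputable section

lemma integrableOn_of_bdd {f : ℝ → ℝ} (hf : Measurable f)
    (hb : ∀ v ∈ Set.Icc (0:ℝ) 1, f v ∈ Set.Icc (0:ℝ) 1) :
    IntegrableOn f (Set.Icc (0:ℝ) 1) := by
  refine Integrable.mono' (integrable_const 1) hf.aestronglyMeasurable ?_
  filter_upwards [ae_restrict_mem measurableSet_Icc] with v hv
  have h := hb v hv
  rw [Real.norm_eq_abs, abs_le]
  exact ⟨by linarith [h.1], h.2⟩

lemma w_mem {N : ℕ} (hN : 1 ≤ N) {v : ℝ} (hv : v ∈ Set.Icc (0:ℝ) 1) :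
    ((⌈(N : ℝ) * v⌉ : ℝ) / N) ∈ Set.Icc (0:ℝ) 1 := by
  have hN0 : (0:ℝ) < N := by exact_mod_cast hN
  constructor
  · apply div_nonneg _ hN0.le
    have : (0:ℤ) ≤ ⌈(N : ℝ) * v⌉ := by
      rw [Int.le_ceil_iff]; push_cast; nlinarith [hv.1]
    exact_mod_cast this
  · rw [div_le_one hN0]
    have : ⌈(N : ℝ) * v⌉ ≤ (N : ℤ) := Int.ceil_le.mpr (by push_cast; nlinarith [hv.2])
    exact_mod_cast this

lemma w_ge {N : ℕ} (hN : 1 ≤ N) (v : ℝ) : v ≤ (⌈(N : ℝ) * v⌉ : ℝ) / N := by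
  have hN0 : (0:ℝ) < N := by exact_mod_cast hN
  rw [le_div_iff₀ hN0]
  calc v * N = N * v := by ring
  _ ≤ _ := Int.le_ceil _

lemma w_le {N : ℕ} (hN : 1 ≤ N) (v : ℝ) : (⌈(N : ℝ) * v⌉ : ℝ) / N ≤ v + 1 / N := by
  have hN0 : (0:ℝ) < N := by exact_mod_cast hN
  rw [div_le_iff₀ hN0]
  have := (Int.ceil_lt_add_one ((N:ℝ) * v)).le
  calc ((⌈(N : ℝ) * v⌉ : ℝ)) ≤ N * v + 1 := this
  _ = (v + 1 / N) * N := by field_simp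

lemma w_fixed {N i : ℕ} (hN : 1 ≤ N) : (⌈(N : ℝ) * ((i:ℝ) / N)⌉ : ℝ) / N = (i:ℝ) / N := by
  have hN0 : (N:ℝ) ≠ 0 := by positivity
  rw [mul_div_cancel₀ _ hN0]
  norm_num

lemma core_bound {n : ℕ} {K : ℝ} (hK : 0 < K) {G : ℝ → ℝ → ℝ} {J : Fin n → Set ℝ}
    (hG : IsGraphon G) (hJ : ∀ i, (J i).OrdConnected)
    (hcov : Set.Icc (0:ℝ) 1 ⊆ ⋃ i, J i)
    (hLip : ∀ i j : Fin n, ∀ u ∈ J i, ∀ u' ∈ J i, ∀ v ∈ J j, ∀ v' ∈ J j,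
        |G u v - G u' v'| ≤ K * (|u - u'| + |v - v'|))
    {N : ℕ} (hN : 1 ≤ N) {u : ℝ} (hu : u ∈ Set.Icc (0:ℝ) 1) :
    ∫ v in Set.Icc (0:ℝ) 1, |G u v - G u ((⌈(N : ℝ) * v⌉ : ℝ) / N)| ≤ (K + n) / N := by
  have hN0 : (0:ℝ) < N := by exact_mod_cast hN
  set w : ℝ → ℝ := fun v => (⌈(N : ℝ) * v⌉ : ℝ) / N with hw_def
  have hwmeas : Measurable w := by
    apply Measurable.div _ measurable_const
    exact (measurable_from_top (f := fun z : ℤ => (z:ℝ))).comp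
      ((measurable_const.mul measurable_id).ceil)
  have hameas : Measurable (fun v => G u v) := hG.measurable.comp measurable_prodMk_left
  have hbmeas : Measurable (fun v => G u (w v)) :=
    hG.measurable.comp (measurable_const.prodMk hwmeas)
  have ha : IntegrableOn (fun v => G u v) (Set.Icc (0:ℝ) 1) :=
    integrableOn_of_bdd hameas (fun v hv => hG.mem_Icc u hu v hv)
  have hb : IntegrableOn (fun v => G u (w v)) (Set.Icc (0:ℝ) 1) :=
    integrableOn_of_bdd hbmeas (fun v hv => hG.mem_Icc u hu _ (w_mem hN hv))
  set B : Set ℝ := ⋃ j, Set.Icc (sSup (J j ∩ Set.Icc (0:ℝ) 1) - 1/N) (sSup (J j ∩ Set.Icc (0:ℝ) 1)) with hB_def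
  have hBmeas : MeasurableSet B := MeasurableSet.iUnion fun j => measurableSet_Icc
  have hBvol : volume B ≤ ENNReal.ofReal ((n:ℝ) / N) := by
    calc volume B ≤ ∑ j : Fin n, volume (Set.Icc (sSup (J j ∩ Set.Icc (0:ℝ) 1) - 1/N) (sSup (J j ∩ Set.Icc (0:ℝ) 1))) :=
          measure_iUnion_fintype_le _ _
    _ = ∑ j : Fin n, ENNReal.ofReal (1/N) := by
          apply Finset.sum_congr rfl; intro j _
          rw [Real.volume_Icc]; ring_nf
    _ = ENNReal.ofReal ((n:ℝ) / N) := by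
          rw [Finset.sum_const, Finset.card_univ, Fintype.card_fin, nsmul_eq_mul]
          rw [← ENNReal.ofReal_natCast n, ← ENNReal.ofReal_mul (by positivity)]
          ring_nf
  -- pointwise bound
  have hpt : ∀ v ∈ Set.Icc (0:ℝ) 1,
      |G u v - G u (w v)| ≤ K / N + B.indicator (fun _ => (1:ℝ)) v := by
    intro v hv
    by_cases hvB : v ∈ B
    · rw [Set.indicator_of_mem hvB]
      have h1 := hG.mem_Icc u hu v hv
      have h2 := hG.mem_Icc u hu _ (w_mem hN hv)
      have : (0:ℝ) ≤ K / N := by positivity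
      rw [abs_le]; constructor <;> [linarith [h1.1, h2.2]; linarith [h1.2, h2.1]]
    · rw [Set.indicator_of_notMem hvB, add_zero]
      obtain ⟨j, hvJ⟩ := mem_iUnion.mp (hcov hv)
      set s := sSup (J j ∩ Set.Icc (0:ℝ) 1) with hs_def
      have hbdd : BddAbove (J j ∩ Set.Icc (0:ℝ) 1) := BddAbove.mono inter_subset_right bddAbove_Icc
      have hvmem : v ∈ J j ∩ Set.Icc (0:ℝ) 1 := ⟨hvJ, hv⟩
      have hvs : v ≤ s := le_csSup hbdd hvmem
      have hvlt : v < s - 1/N := by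
        by_contra h
        push_neg at h
        exact hvB (mem_iUnion.2 ⟨j, ⟨h, hvs⟩⟩)
      have hws : w v < s := lt_of_le_of_lt (w_le hN v) (by linarith)
      obtain ⟨x, hxmem, hwx⟩ := exists_lt_of_lt_csSup ⟨v, hvmem⟩ hws
      have hwJ : w v ∈ J j := (hJ j).out hvJ hxmem.1 ⟨w_ge hN v, hwx.le⟩
      obtain ⟨j', huJ⟩ := mem_iUnion.mp (hcov hu)
      have hlip := hLip j' j u huJ u huJ v hvJ (w v) hwJ
      have habs : |v - w v| ≤ 1/N := by
        rw [abs_sub_comm, abs_of_nonneg (by linarith [w_ge hN v])]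
        linarith [w_le hN v]
      have : |u - u| = 0 := by simp
      calc |G u v - G u (w v)| ≤ K * (|u - u| + |v - w v|) := hlip
      _ = K * |v - w v| := by rw [this, zero_add]
      _ ≤ K * (1/N) := by nlinarith
      _ = K / N := by ring
  -- integrate
  have hind : IntegrableOn (B.indicator (fun _ => (1:ℝ))) (Set.Icc (0:ℝ) 1) :=
    (integrable_const 1).indicator hBmeas
  have hrhs : IntegrableOn (fun v => K / N + B.indicator (fun _ => (1:ℝ)) v) (Set.Icc (0:ℝ) 1) :=
    (integrable_const _).add hind
  have hmono := setIntegral_mono_on ((ha.sub hb).abs) hrhs measurableSet_Icc hpt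
  calc ∫ v in Set.Icc (0:ℝ) 1, |G u v - G u (w v)| 
      ≤ ∫ v in Set.Icc (0:ℝ) 1, (K / N + B.indicator (fun _ => (1:ℝ)) v) := hmono
  _ = K / N * (volume (Set.Icc (0:ℝ) 1)).toReal + (volume (Set.Icc (0:ℝ) 1 ∩ B)).toReal := by
        rw [integral_add (integrable_const _) hind, setIntegral_const,
          setIntegral_indicator hBmeas, setIntegral_const]
        simp [smul_eq_mul, mul_comm, Measure.real]
  _ ≤ K / N + (n:ℝ) / N := by
        have h1 : (volume (Set.Icc (0:ℝ) 1)).toReal = 1 := by simp [Real.volume_Icc]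
        have h2 : (volume (Set.Icc (0:ℝ) 1 ∩ B)).toReal ≤ (n:ℝ) / N := by
          apply ENNReal.toReal_le_of_le_ofReal (by positivity)
          exact le_trans (measure_mono inter_subset_right) hBvol
        rw [h1, mul_one]
        linarith
  _ = (K + n) / N := by ring

lemma ratio_bound {a b A B g d : ℝ} (hg : 0 < g) (ha0 : 0 ≤ a) (hb0 : 0 ≤ b) (hb1 : b ≤ 1)
    (hA : g ≤ A) (hB : g/2 ≤ B) (hAB : |A - B| ≤ d) :
    |a/A - b/B| ≤ |a - b| * (1/g) + d * (2/g^2) := by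
  have hA0 : 0 < A := lt_of_lt_of_le hg hA
  have hB0 : 0 < B := lt_of_lt_of_le (by linarith) hB
  have hd : 0 ≤ d := le_trans (abs_nonneg _) hAB
  have key : a/A - b/B = (a - b)/A + b*(B - A)/(A*B) := by field_simp; ring
  rw [key]
  calc |(a - b)/A + b*(B - A)/(A*B)| ≤ |(a-b)/A| + |b*(B-A)/(A*B)| := abs_add_le _ _
  _ = |a-b|/A + b*|A-B|/(A*B) := by
      rw [abs_div, abs_div, abs_of_pos hA0, abs_mul, abs_of_nonneg hb0,
        abs_of_pos (mul_pos hA0 hB0), abs_sub_comm B A]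
  _ ≤ |a-b|/g + 1*d/(g*(g/2)) := by
      have t1 : |a-b|/A ≤ |a-b|/g :=
        div_le_div_of_nonneg_left (abs_nonneg _) hg hA
      have t2 : b*|A-B|/(A*B) ≤ 1*d/(g*(g/2)) := by
        apply div_le_div₀ (by linarith) _ (by nlinarith) (by nlinarith)
        calc b*|A-B| ≤ 1*d := mul_le_mul hb1 hAB (abs_nonneg _) zero_le_one
        _ = 1*d := rfl
      linarith
  _ = |a-b| * (1/g) + d * (2/g^2) := by field_simp

/-- for a blockwise `K`-Lipschitz graphon `G` whose degree function is bounded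
below by `G∞ > 0`, the normalized kernels of the step graphons `G_N` converge at the grid
points at rate `C/N` (for `N ≥ N₀`), and the degrees of `G_N` stay above `G∞/2`; the
constants `C, N₀` depend only on `K`, `n` and `G∞`. -/
theorem stmt_13 (n : ℕ) (K : ℝ) (hK : 0 < K) (Ginf : ℝ) (hGinf : 0 < Ginf) :
    ∃ C : ℝ, 0 < C ∧ ∃ N₀ : ℕ, ∀ (G : ℝ → ℝ → ℝ) (J : Fin n → Set ℝ),
      IsGraphon G →
      (∀ i, (J i).OrdConnected) → Set.Icc (0:ℝ) 1 ⊆ (⋃ i, J i) →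
      (∀ i j : Fin n, ∀ u ∈ J i, ∀ u' ∈ J i, ∀ v ∈ J j, ∀ v' ∈ J j,
        |G u v - G u' v'| ≤ K * (|u - u'| + |v - v'|)) →
      (∀ u ∈ Set.Icc (0:ℝ) 1, Ginf ≤ deg G u) →
      ∀ N i : ℕ, N₀ ≤ N → 1 ≤ i → i ≤ N →
        (∫ v in Set.Icc (0:ℝ) 1,
            |G ((i : ℝ) / N) v / deg G ((i : ℝ) / N) -
              stepG G N ((i : ℝ) / N) v / deg (stepG G N) ((i : ℝ) / N)|) ≤ C / N ∧
        Ginf / 2 ≤ deg (stepG G N) ((i : ℝ) / N) := by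
  refine ⟨(K + n) * (1/Ginf + 2/Ginf^2), by positivity, max 1 ⌈2*(K+(n:ℝ))/Ginf⌉₊, ?_⟩
  intro G J hG hJ hcov hLip hdeg N i hN hi1 hiN
  have hN1 : 1 ≤ N := le_trans (le_max_left _ _) hN
  have hN0 : (0:ℝ) < N := by exact_mod_cast hN1
  have hKn : (0:ℝ) ≤ K + n := by positivity
  -- (K+n)/N ≤ Ginf/2
  have hhalf : (K + (n:ℝ)) / N ≤ Ginf / 2 := by
    have h1 : 2*(K+(n:ℝ))/Ginf ≤ (⌈2*(K+(n:ℝ))/Ginf⌉₊ : ℝ) := Nat.le_ceil _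
    have h2 : ((⌈2*(K+(n:ℝ))/Ginf⌉₊ : ℕ) : ℝ) ≤ N :=
      Nat.cast_le.mpr (le_trans (le_max_right _ _) hN)
    have h3 : 2*(K+(n:ℝ)) ≤ Ginf * N := by
      rw [div_le_iff₀ hGinf] at h1
      nlinarith
    rw [div_le_div_iff₀ hN0 (by norm_num : (0:ℝ) < 2)]
    nlinarith
  set u : ℝ := (i:ℝ)/N with hu_def
  have hu : u ∈ Set.Icc (0:ℝ) 1 := by
    constructor
    · positivity
    · rw [hu_def, div_le_one hN0]; exact_mod_cast hiN
  set w : ℝ → ℝ := fun v => (⌈(N : ℝ) * v⌉ : ℝ) / N with hw_def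
  have key : ∫ v in Set.Icc (0:ℝ) 1, |G u v - G u (w v)| ≤ (K + n) / N :=
    core_bound hK hG hJ hcov hLip hN1 hu
  -- the step graphon at u is G u ∘ w
  have hstep : ∀ v, stepG G N u v = G u (w v) := by
    intro v
    rw [hw_def]
    show G ((⌈(N : ℝ) * ((i:ℝ)/N)⌉ : ℝ) / N) _ = _
    rw [w_fixed hN1]
  have hdegN : deg (stepG G N) u = ∫ v in Set.Icc (0:ℝ) 1, G u (w v) := by
    unfold deg; simp only [hstep]
  -- measurability and integrability
  have hwmeas : Measurable w := by
    apply Measurable.div _ measurable_const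
    exact (measurable_from_top (f := fun z : ℤ => (z:ℝ))).comp
      ((measurable_const.mul measurable_id).ceil)
  have hameas : Measurable (fun v => G u v) := hG.measurable.comp measurable_prodMk_left
  have hbmeas : Measurable (fun v => G u (w v)) :=
    hG.measurable.comp (measurable_const.prodMk hwmeas)
  have ha : IntegrableOn (fun v => G u v) (Set.Icc (0:ℝ) 1) :=
    integrableOn_of_bdd hameas (fun v hv => hG.mem_Icc u hu v hv)
  have hb : IntegrableOn (fun v => G u (w v)) (Set.Icc (0:ℝ) 1) :=
    integrableOn_of_bdd hbmeas (fun v hv => hG.mem_Icc u hu _ (w_mem hN1 hv))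
  have hdiff : IntegrableOn (fun v => G u v - G u (w v)) (Set.Icc (0:ℝ) 1) := ha.sub hb
  have habsdiff : IntegrableOn (fun v => |G u v - G u (w v)|) (Set.Icc (0:ℝ) 1) := hdiff.abs
  set A : ℝ := deg G u with hA_def
  set Bd : ℝ := deg (stepG G N) u with hBd_def
  have hvol1 : (volume (Set.Icc (0:ℝ) 1)).toReal = 1 := by simp [Real.volume_Icc]
  -- A and Bd bounds
  have hAG : Ginf ≤ A := hdeg u hu
  have hAB : |A - Bd| ≤ (K + n) / N := by
    rw [hA_def, hdegN]
    unfold deg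
    rw [← integral_sub ha hb]
    calc |∫ v in Set.Icc (0:ℝ) 1, (G u v - G u (w v))|
        ≤ ∫ v in Set.Icc (0:ℝ) 1, |G u v - G u (w v)| := by
          rw [← Real.norm_eq_abs]
          refine le_trans (norm_integral_le_integral_norm _) ?_
          simp [Real.norm_eq_abs]
    _ ≤ (K + n) / N := key
  have hB2 : Ginf / 2 ≤ Bd := by
    have := abs_le.mp hAB
    linarith [this.1, this.2]
  refine ⟨?_, hB2⟩
  -- final integral bound
  have hApos : 0 < A := lt_of_lt_of_le hGinf hAG
  have hBdpos : 0 < Bd := lt_of_lt_of_le (by linarith) hB2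
  set c : ℝ := (K + n) / N * (2/Ginf^2) with hc_def
  have hpt : ∀ v ∈ Set.Icc (0:ℝ) 1,
      |G u v / A - G u (w v) / Bd| ≤ |G u v - G u (w v)| * (1/Ginf) + c := by
    intro v hv
    have h1 := hG.mem_Icc u hu v hv
    have h2 := hG.mem_Icc u hu _ (w_mem hN1 hv)
    exact ratio_bound hGinf h1.1 h2.1 h2.2 hAG hB2 hAB
  have hlhs : IntegrableOn (fun v => |G u v / A - G u (w v) / Bd|) (Set.Icc (0:ℝ) 1) :=
    ((ha.div_const A).sub (hb.div_const Bd)).abs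
  have hrhs : IntegrableOn (fun v => |G u v - G u (w v)| * (1/Ginf) + c) (Set.Icc (0:ℝ) 1) :=
    (habsdiff.mul_const _).add (integrable_const c)
  have hmono := setIntegral_mono_on hlhs hrhs measurableSet_Icc hpt
  have hint_eq :
      (∫ v in Set.Icc (0:ℝ) 1, (|G u v - G u (w v)| * (1/Ginf) + c))
        = (∫ v in Set.Icc (0:ℝ) 1, |G u v - G u (w v)|) * (1/Ginf) + c := by
    rw [integral_add (habsdiff.mul_const _) (integrable_const c),
      integral_mul_const, setIntegral_const,
      show volume.real (Set.Icc (0:ℝ) 1) = 1 from hvol1, one_smul]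
  have hfinal : (∫ v in Set.Icc (0:ℝ) 1, |G u v / A - G u (w v) / Bd|)
      ≤ (K + n) / N * (1/Ginf) + c := by
    refine le_trans hmono ?_
    rw [hint_eq]
    have hGinfinv : (0:ℝ) ≤ 1/Ginf := by positivity
    nlinarith [key]
  have hCN : (K + n) / N * (1/Ginf) + c = (K + n) * (1/Ginf + 2/Ginf^2) / N := by
    rw [hc_def]; field_simp
  -- rewrite goal integrand: stepG G N u v = G u (w v)
  calc (∫ v in Set.Icc (0:ℝ) 1, |G u v / deg G u - stepG G N u v / deg (stepG G N) u|)
      = ∫ v in Set.Icc (0:ℝ) 1, |G u v / A - G u (w v) / Bd| := by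
        simp only [hstep, ← hA_def, ← hBd_def]
  _ ≤ (K + n) * (1/Ginf + 2/Ginf^2) / N := by rw [← hCN]; exact hfinal

end
end

section
/- Let G be a graphon and let u, v ∈ [0,1] be such that ‖G(u,·)‖₁ > 0 and ‖G(v,·)‖₁ > 0, and let μ = (μ^w)_{w∈[0,1]} ∈ M(ℝ^d) with M₂ := sup_{w∈[0,1]} ∫ |x|² μ^w(dx). Then W₂²( [Gμ]^u , [Gμ]^v ) ≤ 2 M₂ ∫₀¹ | G(u,w)/‖G(u,·)‖₁ − G(v,w)/‖G(v,·)‖₁ | dw. -/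
open MeasureTheory ENNReal Set Filter

noncomputable section

/-- Squared 2-Wasserstein distance (valued in `ℝ≥0∞`), as the infimum over couplings of the
integral of the squared distance. -/
def W2sq {E : Type} [MeasurableSpace E] [NormedAddCommGroup E] (μ ν : Measure E) : ℝ≥0∞ :=
  ⨅ (π : Measure (E × E)) (_ : π.map Prod.fst = μ ∧ π.map Prod.snd = ν),
    ∫⁻ p, (‖p.1 - p.2‖₊ : ℝ≥0∞) ^ 2 ∂π

/-- 2-Wasserstein distance (valued in `ℝ≥0∞`). -/
def W2 {E : Type} [MeasurableSpace E] [NormedAddCommGroup E] (μ ν : Measure E) : ℝ≥0∞ :=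
  W2sq μ ν ^ (1/2 : ℝ)

/- ### Auxiliary material -/

private lemma enn_inv_mul_le_one (a : ℝ≥0∞) : a⁻¹ * a ≤ 1 := by
  rcases eq_or_ne a 0 with h | h
  · simp [h]
  rcases eq_or_ne a ⊤ with h' | h'
  · simp [h']
  · rw [ENNReal.inv_mul_cancel h h']

private lemma sq_dist_le {E : Type} [NormedAddCommGroup E] (x y : E) :
    (‖x - y‖₊ : ℝ≥0∞) ^ 2 ≤ 2 * (‖x‖₊ : ℝ≥0∞) ^ 2 + 2 * (‖y‖₊ : ℝ≥0∞) ^ 2 := by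
  have h : ‖x - y‖ ^ 2 ≤ 2 * ‖x‖ ^ 2 + 2 * ‖y‖ ^ 2 := by
    have h1 : ‖x - y‖ ^ 2 ≤ (‖x‖ + ‖y‖) ^ 2 :=
      pow_le_pow_left₀ (norm_nonneg _) (norm_sub_le x y) 2
    nlinarith [sq_nonneg (‖x‖ - ‖y‖)]
  calc (‖x - y‖₊ : ℝ≥0∞) ^ 2 = ENNReal.ofReal (‖x - y‖ ^ 2) := by
        rw [← enorm_eq_nnnorm, ← ofReal_norm, ← ENNReal.ofReal_pow (norm_nonneg _)]
    _ ≤ ENNReal.ofReal (2 * ‖x‖ ^ 2 + 2 * ‖y‖ ^ 2) := ENNReal.ofReal_le_ofReal h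
    _ = 2 * (‖x‖₊ : ℝ≥0∞) ^ 2 + 2 * (‖y‖₊ : ℝ≥0∞) ^ 2 := by
        rw [ENNReal.ofReal_add (by positivity) (by positivity),
          ENNReal.ofReal_mul (by norm_num), ENNReal.ofReal_mul (by norm_num),
          ENNReal.ofReal_pow (norm_nonneg _), ENNReal.ofReal_pow (norm_nonneg _),
          ofReal_norm, ofReal_norm, enorm_eq_nnnorm, enorm_eq_nnnorm, ENNReal.ofReal_ofNat]

private lemma bind_diag_map {α E : Type*} [MeasurableSpace α] [MeasurableSpace E]
    (σ : Measure α) (μ : α → Measure E) (hμ : Measurable μ) (p : E × E → E)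
    (hp : Measurable p) (hpd : ∀ x : E, p (x, x) = x) :
    (σ.bind (fun w => (μ w).map (fun x => (x, x)))).map p = σ.bind μ := by
  have hdiag : Measurable fun x : E => (x, x) := measurable_id.prodMk measurable_id
  have hκm : Measurable fun w => (μ w).map (fun x : E => (x, x)) :=
    (Measure.measurable_map _ hdiag).comp hμ
  ext s hs
  rw [Measure.map_apply hp hs, Measure.bind_apply (hp hs) hκm.aemeasurable, Measure.bind_apply hs hμ.aemeasurable]
  refine lintegral_congr fun w => ?_
  rw [Measure.map_apply hdiag (hp hs)]
  congr 1
  ext x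
  simp [hpd]

/-- σ-additivity of `bind` in the first argument. -/
private lemma bind_add_meas {α E : Type*} [MeasurableSpace α] [MeasurableSpace E]
    (σ₁ σ₂ : Measure α) (μ : α → Measure E) (hμ : Measurable μ) :
    (σ₁ + σ₂).bind μ = σ₁.bind μ + σ₂.bind μ := by
  ext s hs
  simp [Measure.bind_apply hs hμ.aemeasurable, lintegral_add_measure]

/-- The density of `[Gμ]^u`'s mixing measure. -/
private def dens (G : ℝ → ℝ → ℝ) (u : ℝ) : ℝ → ℝ≥0∞ :=
  fun w => ENNReal.ofReal (G u w) / ENNReal.ofReal (deg G u)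

private lemma dens_measurable (G : ℝ → ℝ → ℝ) (hG : Measurable (Function.uncurry G)) (u : ℝ) :
    Measurable (dens G u) := by
  have hGu : Measurable (G u) := hG.comp (measurable_const.prodMk measurable_id)
  exact (ENNReal.measurable_ofReal.comp hGu).div measurable_const

private lemma dens_lintegral (G : ℝ → ℝ → ℝ) (hG : IsGraphon G) (u : ℝ)
    (hu : u ∈ Set.Icc (0:ℝ) 1) (hdu : 0 < deg G u) :
    ∫⁻ w in Set.Icc (0:ℝ) 1, dens G u w = 1 := by
  have hGu : Measurable (G u) := hG.measurable.comp (measurable_const.prodMk measurable_id)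
  have hInt : Integrable (G u) (volume.restrict (Set.Icc (0:ℝ) 1)) := by
    refine ⟨hGu.aestronglyMeasurable, ?_⟩
    refine HasFiniteIntegral.of_bounded (C := 1) ?_
    filter_upwards [ae_restrict_mem measurableSet_Icc] with w hw
    rw [Real.norm_eq_abs, abs_of_nonneg (hG.mem_Icc u hu w hw).1]
    exact (hG.mem_Icc u hu w hw).2
  have hnn : 0 ≤ᵐ[volume.restrict (Set.Icc (0:ℝ) 1)] G u := by
    filter_upwards [ae_restrict_mem measurableSet_Icc] with w hw
    exact (hG.mem_Icc u hu w hw).1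
  have h1 : ∫⁻ w in Set.Icc (0:ℝ) 1, ENNReal.ofReal (G u w) = ENNReal.ofReal (deg G u) :=
    (ofReal_integral_eq_lintegral_ofReal hInt hnn).symm
  calc ∫⁻ w in Set.Icc (0:ℝ) 1, dens G u w
      = (∫⁻ w in Set.Icc (0:ℝ) 1, ENNReal.ofReal (G u w)) * (ENNReal.ofReal (deg G u))⁻¹ := by
        simp only [dens, div_eq_mul_inv]
        exact lintegral_mul_const' _ _ (by simp [hdu])
    _ = 1 := by
        rw [h1]
        exact ENNReal.mul_inv_cancel (ENNReal.ofReal_pos.2 hdu).ne' ENNReal.ofReal_ne_top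

theorem stmt_14 {d : ℕ} (G : ℝ → ℝ → ℝ) (hG : IsGraphon G)
    (u v : ℝ) (hu : u ∈ Set.Icc (0:ℝ) 1) (hv : v ∈ Set.Icc (0:ℝ) 1)
    (hdu : 0 < deg G u) (hdv : 0 < deg G v)
    (μ : ℝ → Measure (Ed d)) (hμ : MemM d μ) :
    W2sq (graphonAvg G μ u) (graphonAvg G μ v) ≤
      2 * (⨆ w ∈ Set.Icc (0:ℝ) 1, ∫⁻ x, (‖x‖₊ : ℝ≥0∞) ^ 2 ∂(μ w)) *
        ∫⁻ w in Set.Icc (0:ℝ) 1,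
          ENNReal.ofReal |G u w / deg G u - G v w / deg G v| := by
  classical
  set M2 := ⨆ w ∈ Set.Icc (0:ℝ) 1, ∫⁻ x, (‖x‖₊ : ℝ≥0∞) ^ 2 ∂(μ w) with hM2
  set ρ : Measure ℝ := volume.restrict (Set.Icc (0:ℝ) 1) with hρ
  have hμmeas : Measurable μ := Measure.measurable_of_measurable_coe μ hμ.meas
  set f := dens G u with hfdef
  set g := dens G v with hgdef
  have hf : Measurable f := dens_measurable G hG.measurable u
  have hg : Measurable g := dens_measurable G hG.measurable v
  set m : ℝ → ℝ≥0∞ := fun w => min (f w) (g w) with hmdef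
  have hm : Measurable m := hf.min hg
  have hIntf : ∫⁻ w, f w ∂ρ = 1 := dens_lintegral G hG u hu hdu
  have hIntg : ∫⁻ w, g w ∂ρ = 1 := dens_lintegral G hG v hv hdv
  have hmtop : ∫⁻ w, m w ∂ρ ≠ ⊤ := by
    refine ne_top_of_le_ne_top (by simp [hIntf]) (lintegral_mono fun w => min_le_left _ _)
  set ε := ∫⁻ w, (f w - m w) ∂ρ with hεdef
  have hεg : ∫⁻ w, (g w - m w) ∂ρ = ε := by
    rw [hεdef, lintegral_sub hm hmtop (ae_of_all _ fun w => min_le_left _ _),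
      lintegral_sub hm hmtop (ae_of_all _ fun w => min_le_right _ _), hIntf, hIntg]
  have hε_le : ε ≤ 1 := by
    rw [hεdef, ← hIntf]
    exact lintegral_mono fun w => tsub_le_self
  have hεtop : ε ≠ ⊤ := ne_top_of_le_ne_top one_ne_top hε_le
  -- the three pieces of the mixing measures
  set ρm : Measure ℝ := ρ.withDensity m with hρm
  set ρu' : Measure ℝ := ρ.withDensity (fun w => f w - m w) with hρu'
  set ρv' : Measure ℝ := ρ.withDensity (fun w => g w - m w) with hρv'
  -- measures of the form ρ.withDensity h live on Icc 0 1
  have hae : ∀ h : ℝ → ℝ≥0∞, ∀ᵐ w ∂(ρ.withDensity h), w ∈ Set.Icc (0:ℝ) 1 := by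
    intro h
    rw [ae_iff]
    have : (ρ.withDensity h) {w | ¬ w ∈ Set.Icc (0:ℝ) 1} =
        ∫⁻ w in (Set.Icc (0:ℝ) 1)ᶜ, h w ∂ρ := withDensity_apply h measurableSet_Icc.compl
    rw [this, hρ, Measure.restrict_restrict measurableSet_Icc.compl, Set.compl_inter_self,
      Measure.restrict_empty, lintegral_zero_measure]
  -- total mass of a bind
  have mass_bind : ∀ h : ℝ → ℝ≥0∞,
      ((ρ.withDensity h).bind μ) Set.univ = (ρ.withDensity h) Set.univ := by
    intro h
    rw [Measure.bind_apply MeasurableSet.univ hμmeas.aemeasurable]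
    have : ∫⁻ w, μ w Set.univ ∂(ρ.withDensity h) = ∫⁻ w, 1 ∂(ρ.withDensity h) := by
      refine lintegral_congr_ae ?_
      filter_upwards [hae h] with w hw
      exact (hμ.prob w hw).measure_univ
    rw [this, lintegral_one]
  have hρu'univ : ρu' Set.univ = ε := by
    rw [hρu', withDensity_apply _ MeasurableSet.univ, Measure.restrict_univ]
  have hρv'univ : ρv' Set.univ = ε := by
    rw [hρv', withDensity_apply _ MeasurableSet.univ, Measure.restrict_univ, hεg]
  -- the component measures on Ed d
  set A : Measure (Ed d) := ρu'.bind μ with hAdef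
  set B : Measure (Ed d) := ρv'.bind μ with hBdef
  have hAuniv : A Set.univ = ε := by rw [hAdef, hρu', mass_bind, ← hρu', hρu'univ]
  have hBuniv : B Set.univ = ε := by rw [hBdef, hρv', mass_bind, ← hρv', hρv'univ]
  haveI hAfin : IsFiniteMeasure A :=
    ⟨by rw [hAuniv]; exact lt_of_le_of_lt hε_le one_lt_top⟩
  haveI hBfin : IsFiniteMeasure B :=
    ⟨by rw [hBuniv]; exact lt_of_le_of_lt hε_le one_lt_top⟩
  -- decomposition of the mixing measures
  have hdecf : ρ.withDensity f = ρm + ρu' := by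
    have h1 : (fun w => m w + (f w - m w)) = f :=
      funext fun w => add_tsub_cancel_of_le (min_le_left _ _)
    calc ρ.withDensity f = ρ.withDensity (fun w => m w + (f w - m w)) := by rw [h1]
      _ = ρm + ρu' := withDensity_add_left hm _
  have hdecg : ρ.withDensity g = ρm + ρv' := by
    have h1 : (fun w => m w + (g w - m w)) = g :=
      funext fun w => add_tsub_cancel_of_le (min_le_right _ _)
    calc ρ.withDensity g = ρ.withDensity (fun w => m w + (g w - m w)) := by rw [h1]
      _ = ρm + ρv' := withDensity_add_left hm _
  -- the coupling
  have hdiag : Measurable fun x : Ed d => (x, x) := measurable_id.prodMk measurable_id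
  set κ : ℝ → Measure (Ed d × Ed d) := fun w => (μ w).map (fun x => (x, x)) with hκdef
  have hκ : Measurable κ := (Measure.measurable_map _ hdiag).comp hμmeas
  set π₁ : Measure (Ed d × Ed d) := ρm.bind κ with hπ₁def
  set π₂ : Measure (Ed d × Ed d) := ε⁻¹ • (A.prod B) with hπ₂def
  set π : Measure (Ed d × Ed d) := π₁ + π₂ with hπdef
  -- marginals
  have hπ₂fst : π₂.map Prod.fst = A := by
    rw [hπ₂def, Measure.map_smul, Measure.map_fst_prod, hBuniv, smul_smul]
    rcases eq_or_ne ε 0 with h0 | h0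
    · have hA0 : A = 0 := Measure.measure_univ_eq_zero.mp (by rw [hAuniv, h0])
      simp [hA0]
    · rw [ENNReal.inv_mul_cancel h0 hεtop, one_smul]
  have hπ₂snd : π₂.map Prod.snd = B := by
    rw [hπ₂def, Measure.map_smul, Measure.map_snd_prod, hAuniv, smul_smul]
    rcases eq_or_ne ε 0 with h0 | h0
    · have hB0 : B = 0 := Measure.measure_univ_eq_zero.mp (by rw [hBuniv, h0])
      simp [hB0]
    · rw [ENNReal.inv_mul_cancel h0 hεtop, one_smul]
  have hπfst : π.map Prod.fst = graphonAvg G μ u := by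
    have : graphonAvg G μ u = (ρ.withDensity f).bind μ := rfl
    rw [hπdef, Measure.map_add _ _ measurable_fst,
      bind_diag_map ρm μ hμmeas Prod.fst measurable_fst (fun x => rfl), hπ₂fst, this, hdecf,
      bind_add_meas _ _ _ hμmeas]
  have hπsnd : π.map Prod.snd = graphonAvg G μ v := by
    have : graphonAvg G μ v = (ρ.withDensity g).bind μ := rfl
    rw [hπdef, Measure.map_add _ _ measurable_snd,
      bind_diag_map ρm μ hμmeas Prod.snd measurable_snd (fun x => rfl), hπ₂snd, this, hdecg,
      bind_add_meas _ _ _ hμmeas]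
  -- cost function
  set c : Ed d × Ed d → ℝ≥0∞ := fun p => (‖p.1 - p.2‖₊ : ℝ≥0∞) ^ 2 with hcdef
  have hc : Measurable c := ((measurable_fst.sub measurable_snd).nnnorm.coe_nnreal_ennreal).pow_const 2
  have hsq : Measurable fun x : Ed d => (‖x‖₊ : ℝ≥0∞) ^ 2 :=
    measurable_id.nnnorm.coe_nnreal_ennreal.pow_const 2
  -- cost of the diagonal part
  have cost1 : ∫⁻ p, c p ∂π₁ = 0 := by
    rw [hπ₁def, Measure.lintegral_bind hκ.aemeasurable hc.aemeasurable]
    have h0 : ∀ w, ∫⁻ p, c p ∂(κ w) = 0 := by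
      intro w
      rw [hκdef, lintegral_map hc hdiag]
      simp [hcdef, sub_self]
    simp [h0]
  -- second moment bounds
  have momA : ∫⁻ x, (‖x‖₊ : ℝ≥0∞) ^ 2 ∂A ≤ M2 * ε := by
    rw [hAdef, Measure.lintegral_bind hμmeas.aemeasurable hsq.aemeasurable]
    calc ∫⁻ w, (∫⁻ x, (‖x‖₊ : ℝ≥0∞) ^ 2 ∂(μ w)) ∂ρu'
        ≤ ∫⁻ _, M2 ∂ρu' := by
          refine lintegral_mono_ae ?_
          filter_upwards [hae _] with w hw
          exact le_biSup (fun w => ∫⁻ x, (‖x‖₊ : ℝ≥0∞) ^ 2 ∂(μ w)) hw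
      _ = M2 * ε := by rw [lintegral_const, hρu'univ]
  have momB : ∫⁻ x, (‖x‖₊ : ℝ≥0∞) ^ 2 ∂B ≤ M2 * ε := by
    rw [hBdef, Measure.lintegral_bind hμmeas.aemeasurable hsq.aemeasurable]
    calc ∫⁻ w, (∫⁻ x, (‖x‖₊ : ℝ≥0∞) ^ 2 ∂(μ w)) ∂ρv'
        ≤ ∫⁻ _, M2 ∂ρv' := by
          refine lintegral_mono_ae ?_
          filter_upwards [hae _] with w hw
          exact le_biSup (fun w => ∫⁻ x, (‖x‖₊ : ℝ≥0∞) ^ 2 ∂(μ w)) hw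
      _ = M2 * ε := by rw [lintegral_const, hρv'univ]
  -- cost of the product part
  have fst_int : ∫⁻ p : Ed d × Ed d, 2 * (‖p.1‖₊ : ℝ≥0∞) ^ 2 ∂(A.prod B)
      = ε * ∫⁻ x, 2 * (‖x‖₊ : ℝ≥0∞) ^ 2 ∂A := by
    rw [← lintegral_map (hsq.const_mul 2) measurable_fst, Measure.map_fst_prod, hBuniv,
      lintegral_smul_measure, smul_eq_mul]
  have snd_int : ∫⁻ p : Ed d × Ed d, 2 * (‖p.2‖₊ : ℝ≥0∞) ^ 2 ∂(A.prod B)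
      = ε * ∫⁻ x, 2 * (‖x‖₊ : ℝ≥0∞) ^ 2 ∂B := by
    rw [← lintegral_map (hsq.const_mul 2) measurable_snd, Measure.map_snd_prod, hAuniv,
      lintegral_smul_measure, smul_eq_mul]
  have prod_cost : ∫⁻ p, c p ∂(A.prod B) ≤ ε * (2 * (M2 * ε)) + ε * (2 * (M2 * ε)) := by
    calc ∫⁻ p, c p ∂(A.prod B)
        ≤ ∫⁻ p : Ed d × Ed d, (2 * (‖p.1‖₊ : ℝ≥0∞) ^ 2 + 2 * (‖p.2‖₊ : ℝ≥0∞) ^ 2) ∂(A.prod B) :=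
          lintegral_mono fun p => sq_dist_le p.1 p.2
      _ = ∫⁻ p : Ed d × Ed d, 2 * (‖p.1‖₊ : ℝ≥0∞) ^ 2 ∂(A.prod B)
          + ∫⁻ p : Ed d × Ed d, 2 * (‖p.2‖₊ : ℝ≥0∞) ^ 2 ∂(A.prod B) :=
          lintegral_add_left ((measurable_fst.nnnorm.coe_nnreal_ennreal.pow_const 2).const_mul 2) _
      _ = ε * ∫⁻ x, 2 * (‖x‖₊ : ℝ≥0∞) ^ 2 ∂A + ε * ∫⁻ x, 2 * (‖x‖₊ : ℝ≥0∞) ^ 2 ∂B := by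
          rw [fst_int, snd_int]
      _ ≤ ε * (2 * (M2 * ε)) + ε * (2 * (M2 * ε)) := by
          gcongr
          · rw [lintegral_const_mul 2 hsq]
            exact mul_le_mul_right momA 2
          · rw [lintegral_const_mul 2 hsq]
            exact mul_le_mul_right momB 2
  -- the pointwise identity for the RHS integrand
  have hsum : ∫⁻ w, ((f w - m w) + (g w - m w)) ∂ρ = ε + ε := by
    rw [lintegral_add_left (f := fun w => f w - m w) (hf.sub hm), hεg, ← hεdef]
  have hI : ∫⁻ w in Set.Icc (0:ℝ) 1,
      ENNReal.ofReal |G u w / deg G u - G v w / deg G v| = ε + ε := by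
    rw [← hsum]
    refine lintegral_congr_ae ?_
    filter_upwards [ae_restrict_mem measurableSet_Icc] with w hw
    refine Eq.symm ?_
    have hfw : f w = ENNReal.ofReal (G u w / deg G u) :=
      (ENNReal.ofReal_div_of_pos hdu).symm
    have hgw : g w = ENNReal.ofReal (G v w / deg G v) :=
      (ENNReal.ofReal_div_of_pos hdv).symm
    have ha : (0:ℝ) ≤ G u w / deg G u := div_nonneg (hG.mem_Icc u hu w hw).1 hdu.le
    have hb : (0:ℝ) ≤ G v w / deg G v := div_nonneg (hG.mem_Icc v hv w hw).1 hdv.le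
    rcases le_total (G u w / deg G u) (G v w / deg G v) with h | h
    · have hmw : m w = f w := min_eq_left (by rw [hfw, hgw]; exact ofReal_le_ofReal h)
      rw [hmw, tsub_self, zero_add, hfw, hgw, ← ENNReal.ofReal_sub _ ha]
      rw [abs_sub_comm, abs_of_nonneg (sub_nonneg.2 h)]
    · have hmw : m w = g w := min_eq_right (by rw [hfw, hgw]; exact ofReal_le_ofReal h)
      rw [hmw, tsub_self, add_zero, hfw, hgw, ← ENNReal.ofReal_sub _ hb]
      rw [abs_of_nonneg (sub_nonneg.2 h)]
  -- put everything together
  have hW : W2sq (graphonAvg G μ u) (graphonAvg G μ v) ≤ ∫⁻ p, c p ∂π := by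
    exact iInf₂_le π ⟨hπfst, hπsnd⟩
  refine hW.trans ?_
  rw [hI]
  calc ∫⁻ p, c p ∂π = ∫⁻ p, c p ∂π₁ + ∫⁻ p, c p ∂π₂ := lintegral_add_measure _ _ _
    _ = ε⁻¹ * ∫⁻ p, c p ∂(A.prod B) := by
        rw [cost1, zero_add, hπ₂def, lintegral_smul_measure, smul_eq_mul]
    _ ≤ ε⁻¹ * (ε * (2 * (M2 * ε)) + ε * (2 * (M2 * ε))) := mul_le_mul_right prod_cost _
    _ = (2 * M2 * (ε + ε)) * (ε⁻¹ * ε) := by ring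
    _ ≤ (2 * M2 * (ε + ε)) * 1 := mul_le_mul_right (enn_inv_mul_le_one ε) _
    _ = 2 * M2 * (ε + ε) := mul_one _

end
end
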